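/- arXiv:1510.02114 — 3 statements merged into one kernel-verified Lean document; each statement's English description precedes it below -/
import Mathlib

section
/- Let p be a prime, L a finite extension of ℚ_p with ring of integers O_L, and n ≥ 1. Let Σ_n ⊂ (O_{C_p})^n be the set of points of the form (ζ_1 − 1, …, ζ_n − 1) where each ζ_i is a root of unity of p-power order. If f ∈ O_L⟦X_1, …, X_n⟧ ⊗ L satisfies f(x) = 0 for all but finitely many x ∈ Σ_n, then f = 0. -/
open Filter Topology

/-- A multiplicative norm bounded by 1 on ℕ is nonarchimedean. -/
lemma aux_nonarch {K : Type*} [NormedField K] (h : ∀ m : ℕ, ‖(m : K)‖ ≤ 1)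
    (x y : K) : ‖x + y‖ ≤ max ‖x‖ ‖y‖ := by
  set M := max ‖x‖ ‖y‖ with hM
  have hM0 : 0 ≤ M := le_trans (norm_nonneg x) (le_max_left _ _)
  by_contra hc
  push_neg at hc
  have key : ∀ m : ℕ, ‖x + y‖ ^ m ≤ (m + 1) * M ^ m := by
    intro m
    have h1 : ‖x + y‖ ^ m = ‖(x + y) ^ m‖ := (norm_pow _ _).symm
    rw [h1, add_pow]
    refine le_trans (norm_sum_le _ _) ?_
    have h2 : ∀ i ∈ Finset.range (m + 1), ‖x ^ i * y ^ (m - i) * (m.choose i : K)‖ ≤ M ^ m := by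
      intro i hi
      rw [Finset.mem_range, Nat.lt_succ_iff] at hi
      rw [norm_mul, norm_mul, norm_pow, norm_pow]
      calc ‖x‖ ^ i * ‖y‖ ^ (m - i) * ‖(m.choose i : K)‖
          ≤ M ^ i * M ^ (m - i) * 1 := by
            gcongr <;> first
              | exact norm_nonneg _
              | exact le_max_left _ _
              | exact le_max_right _ _
              | exact h _
        _ = M ^ m := by rw [mul_one, ← pow_add, Nat.add_sub_cancel' hi]
    calc ∑ i ∈ Finset.range (m + 1), ‖x ^ i * y ^ (m - i) * (m.choose i : K)‖
        ≤ ∑ _i ∈ Finset.range (m + 1), M ^ m := Finset.sum_le_sum h2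
      _ = (m + 1) * M ^ m := by
          rw [Finset.sum_const, Finset.card_range, nsmul_eq_mul]
          push_cast; ring
  -- derive a contradiction
  have hMpos : 0 < M ∨ M = 0 := hM0.lt_or_eq.imp id Eq.symm
  rcases hMpos with hMpos | hM0'
  · -- M > 0 : let q = ‖x+y‖/M > 1, q^m ≤ m+1 for all m
    set c := ‖x + y‖ with hcdef
    have hq : 1 < c / M := (one_lt_div hMpos).2 hc
    set ε := c / M - 1 with hε
    have hε0 : 0 < ε := by simp [hε]; linarith
    -- choose m with m * ε^2 ≥ 2 and m ≥ 1
    obtain ⟨m, hm⟩ := exists_nat_ge (2 / (ε * ε))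
    have hm1 : (2 : ℝ) ≤ m * (ε * ε) := by
      rw [div_le_iff₀ (by positivity)] at hm; linarith
    have hq1 : (c / M) ^ m ≥ 1 + m * ε := by
      have := one_add_mul_le_pow (a := ε) (by linarith) m
      calc (c / M) ^ m = (1 + ε) ^ m := by rw [hε]; ring_nf
        _ ≥ 1 + m * ε := this
    have hq2 : (c / M) ^ (2 * m) ≥ (1 + m * ε) ^ 2 := by
      rw [two_mul, pow_add]
      have h0 : (0:ℝ) ≤ 1 + m * ε := by positivity
      calc (c/M)^m * (c/M)^m ≥ (1 + m*ε) * (1 + m*ε) := by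
            apply mul_le_mul hq1 hq1 h0 (by positivity)
        _ = (1 + m*ε)^2 := by ring
    have hkey := key (2 * m)
    have hcm : (c / M) ^ (2*m) ≤ (2*m) + 1 := by
      rw [div_pow, div_le_iff₀ (by positivity)]
      calc c ^ (2*m) ≤ ((2*m : ℕ) + 1) * M ^ (2*m) := hkey
        _ = ((2*m : ℝ) + 1) * M ^ (2*m) := by push_cast; ring
    have hexp : (1 + (m:ℝ) * ε) ^ 2 = 1 + 2 * ((m:ℝ) * ε) + ((m:ℝ) * ε) * ((m:ℝ) * ε) := by ring
    have hmpos : (0:ℝ) < m := by nlinarith [hm1, hε0]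
    have h2m : (m:ℝ)*ε*((m:ℝ)*ε) ≥ 2*m := by nlinarith [hm1, hmpos]
    have hu : 0 < (m:ℝ) * ε := mul_pos hmpos hε0
    have hfin : (1 + (m:ℝ) * ε) ^ 2 ≤ 2*(m:ℝ)+1 := le_trans hq2 hcm
    rw [hexp] at hfin
    linarith [hfin, h2m, hu]
  · -- M = 0
    have h1 : ‖x‖ ≤ 0 := by rw [← hM0']; exact le_max_left _ _
    have h2 : ‖y‖ ≤ 0 := by rw [← hM0']; exact le_max_right _ _
    have h3 : ‖x + y‖ ≤ 0 := le_trans (norm_add_le x y) (by linarith)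
    rw [hM0'] at hc
    linarith

/-- bound for finite sums under a nonarchimedean norm -/
lemma aux_sum_le {K : Type*} [NormedField K]
    (hna : ∀ x y : K, ‖x + y‖ ≤ max ‖x‖ ‖y‖)
    {ι : Type*} (s : Finset ι) (g : ι → K) {B : ℝ} (hB : 0 ≤ B)
    (h : ∀ i ∈ s, ‖g i‖ ≤ B) : ‖∑ i ∈ s, g i‖ ≤ B := by
  classical
  induction s using Finset.induction with
  | empty => simpa using hB
  | @insert a s' hx ih =>
    rw [Finset.sum_insert hx]
    refine le_trans (hna _ _) (max_le (h a (Finset.mem_insert_self _ _)) ?_)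
    exact ih fun i hi => h i (Finset.mem_insert_of_mem hi)

/-- bound for tsum under a nonarchimedean norm -/
lemma aux_tsum_le {K : Type*} [NormedField K] [CompleteSpace K]
    (hna : ∀ x y : K, ‖x + y‖ ≤ max ‖x‖ ‖y‖)
    {ι : Type*} (g : ι → K) (hg : Summable g) {B : ℝ} (hB : 0 ≤ B)
    (h : ∀ i, ‖g i‖ ≤ B) : ‖∑' i, g i‖ ≤ B := by
  refine le_of_tendsto (hg.hasSum.norm) ?_
  · exact Filter.Eventually.of_forall fun s => aux_sum_le hna s g hB fun i _ => h i

/-- summability from cofinite smallness -/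
lemma aux_summable {K : Type*} [NormedField K] [CompleteSpace K]
    (hna : ∀ x y : K, ‖x + y‖ ≤ max ‖x‖ ‖y‖)
    {ι : Type*} (g : ι → K)
    (h : ∀ ε : ℝ, 0 < ε → {i : ι | ε ≤ ‖g i‖}.Finite) : Summable g := by
  rw [summable_iff_vanishing_norm]
  intro ε hε
  refine ⟨(h (ε/2) (by linarith)).toFinset, fun t ht => ?_⟩
  have : ∀ i ∈ t, ‖g i‖ ≤ ε / 2 := by
    intro i hi
    by_contra hgi
    push_neg at hgi
    have : i ∈ (h (ε/2) (by linarith)).toFinset := by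
      simp only [Set.Finite.mem_toFinset, Set.mem_setOf_eq]; linarith
    exact (Finset.disjoint_left.1 ht hi) this
  calc ‖∑ i ∈ t, g i‖ ≤ ε/2 := aux_sum_le hna t g (by linarith) this
    _ < ε := by linarith

/-- In a proper nonarchimedean normed field, the set of norm values in `[c, b]` is finite. -/
lemma aux_values_finite {K : Type*} [NormedField K] [ProperSpace K]
    (hna : ∀ x y : K, ‖x + y‖ ≤ max ‖x‖ ‖y‖) {c b : ℝ} (hc : 0 < c) :
    {v : ℝ | c ≤ v ∧ v ≤ b ∧ ∃ x : K, ‖x‖ = v}.Finite := by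
  by_contra hinf
  rw [← Set.not_infinite, not_not] at hinf
  set emb := hinf.natEmbedding with hemb
  -- witnesses
  have hprop : ∀ k : ℕ, c ≤ (emb k : ℝ) ∧ (emb k : ℝ) ≤ b ∧ ∃ x : K, ‖x‖ = (emb k : ℝ) :=
    fun k => (emb k).2
  choose xs hxs using fun k => (hprop k).2.2
  have hmem : ∀ k, xs k ∈ Metric.closedBall (0 : K) b := by
    intro k
    rw [Metric.mem_closedBall, dist_zero_right, hxs]
    exact (hprop k).2.1
  obtain ⟨x, -, φ, hφ, hlim⟩ :=
    (isCompact_closedBall (0 : K) b).tendsto_subseq hmem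
  have hnx : Tendsto (fun k => ‖xs (φ k)‖) atTop (𝓝 ‖x‖) := (hlim.norm : _)
  have hxpos : c ≤ ‖x‖ := by
    refine le_of_tendsto_of_tendsto' tendsto_const_nhds hnx fun k => ?_
    rw [hxs]; exact (hprop (φ k)).1
  have hsub : Tendsto (fun k => ‖xs (φ k) - x‖) atTop (𝓝 0) := by
    have := hlim.sub (tendsto_const_nhds (x := x))
    simpa using (this.norm : _)
  have hev : ∀ᶠ k in atTop, ‖xs (φ k) - x‖ < ‖x‖ := by
    have hx0 : (0:ℝ) < ‖x‖ := lt_of_lt_of_le hc hxpos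
    exact hsub.eventually (eventually_lt_nhds hx0)
  -- on those k, ‖xs (φ k)‖ = ‖x‖
  have heq : ∀ᶠ k in atTop, ‖xs (φ k)‖ = ‖x‖ := by
    filter_upwards [hev] with k hk
    have h1 : ‖xs (φ k)‖ ≤ ‖x‖ := by
      have := hna (xs (φ k) - x) x
      simpa [sub_add_cancel, max_le_iff, le_max_iff] using
        (le_trans (le_of_eq (by ring_nf : ‖xs (φ k)‖ = ‖xs (φ k) - x + x‖)) (le_trans this (max_le hk.le le_rfl)))
    have h2 : ‖x‖ ≤ ‖xs (φ k)‖ := by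
      have h3 := hna (x - xs (φ k)) (xs (φ k))
      have h4 : ‖x - xs (φ k)‖ < ‖x‖ := by rwa [norm_sub_rev]
      rcases max_cases ‖x - xs (φ k)‖ ‖xs (φ k)‖ with ⟨hm, -⟩ | ⟨hm, -⟩
      · rw [hm] at h3
        simp only [sub_add_cancel] at h3
        linarith
      · rw [hm] at h3
        simpa [sub_add_cancel] using h3
    linarith
  -- contradiction with injectivity of emb
  rw [eventually_atTop] at heq
  obtain ⟨N, hN⟩ := heq
  have e1 : (emb (φ N) : ℝ) = ‖x‖ := by rw [← hxs]; exact hN N le_rfl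
  have e2 : (emb (φ (N+1)) : ℝ) = ‖x‖ := by rw [← hxs]; exact hN (N+1) (by omega)
  have : φ N = φ (N + 1) := by
    have := emb.injective (a₁ := φ N) (a₂ := φ (N+1)) (Subtype.ext (by rw [e1, e2]))
    exact this
  exact absurd this (ne_of_lt (hφ (Nat.lt_succ_self N)))


/-- max coefficient norm attained, with a gap below it -/
lemma aux_max_gap {K : Type*} [NormedField K] [ProperSpace K]
    (hna : ∀ x y : K, ‖x + y‖ ≤ max ‖x‖ ‖y‖) {ι : Type*} (a : ι → K) (B : ℝ)
    (hbd : ∀ i, ‖a i‖ ≤ B) (i₁ : ι) (h0 : a i₁ ≠ 0) :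
    ∃ (i₀ : ι) (ρ : ℝ), 0 < ‖a i₀‖ ∧ 0 ≤ ρ ∧ ρ < ‖a i₀‖ ∧
      ∀ i, ‖a i‖ = ‖a i₀‖ ∨ ‖a i‖ ≤ ρ := by
  classical
  set v₀ := ‖a i₁‖ with hv₀
  have hv₀pos : 0 < v₀ := norm_pos_iff.2 h0
  have hGfin : {v : ℝ | v₀/2 ≤ v ∧ v ≤ B ∧ ∃ i, ‖a i‖ = v}.Finite := by
    refine Set.Finite.subset (aux_values_finite hna (K := K) (b := B) (half_pos hv₀pos)) ?_
    rintro v ⟨h1, h2, i, rfl⟩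
    exact ⟨h1, h2, a i, rfl⟩
  set G := hGfin.toFinset with hG
  have hv₀G : v₀ ∈ G := by
    rw [hG, Set.Finite.mem_toFinset]
    exact ⟨by linarith, hbd i₁, i₁, rfl⟩
  have hGne : G.Nonempty := ⟨v₀, hv₀G⟩
  set A := G.max' hGne with hA
  have hAG : A ∈ G := G.max'_mem hGne
  obtain ⟨h1A, h2A, i₀, hi₀⟩ := (Set.Finite.mem_toFinset hGfin).1 hAG
  have hv₀A : v₀ ≤ A := G.le_max' _ hv₀G
  set ρ := (insert (v₀/2) (G.erase A)).max' (Finset.insert_nonempty _ _) with hρ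
  refine ⟨i₀, ρ, ?_, ?_, ?_, ?_⟩
  · rw [hi₀]; linarith
  · have : v₀/2 ≤ ρ := Finset.le_max' _ _ (Finset.mem_insert_self _ _)
    linarith
  · rw [hi₀]
    apply Finset.max'_lt_iff _ _ |>.2
    intro v hv
    rcases Finset.mem_insert.1 hv with rfl | hv
    · linarith
    · obtain ⟨hvne, hvG⟩ := Finset.mem_erase.1 hv
      exact lt_of_le_of_ne (G.le_max' _ hvG) hvne
  · intro i
    by_cases hcase : v₀/2 ≤ ‖a i‖
    · have hiG : ‖a i‖ ∈ G := by
        rw [hG, Set.Finite.mem_toFinset]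
        exact ⟨hcase, hbd i, i, rfl⟩
      by_cases he : ‖a i‖ = A
      · left; rw [he, hi₀]
      · right
        refine Finset.le_max' _ _ ?_
        exact Finset.mem_insert_of_mem (Finset.mem_erase.2 ⟨he, hiG⟩)
    · right
      push_neg at hcase
      have : v₀/2 ≤ ρ := Finset.le_max' _ _ (Finset.mem_insert_self _ _)
      linarith

lemma aux_pow_eq_one {r : ℝ} (h0 : 0 ≤ r) {N : ℕ} (hN : N ≠ 0) (h : r ^ N = 1) : r = 1 := by
  rcases lt_trichotomy r 1 with h1 | h1 | h1
  · exact absurd h (by have := pow_lt_one₀ h0 h1 hN; linarith)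
  · exact h1
  · exact absurd h (by have := one_lt_pow₀ h1 hN; linarith)

lemma aux_root {C : Type*} [NormedField C] [IsAlgClosed C]
    (hna : ∀ x y : C, ‖x + y‖ ≤ max ‖x‖ ‖y‖)
    {p : ℕ} [hp : Fact p.Prime] (hpC : ‖(p : C)‖ = (p : ℝ)⁻¹) (m : ℕ) :
    ∃ ζ : C, ζ ^ p ^ (m + 1) = 1 ∧
      ‖ζ - 1‖ ^ (p ^ m * (p - 1)) = (p : ℝ)⁻¹ ∧ 0 < ‖ζ - 1‖ ∧ ‖ζ - 1‖ < 1 := by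
  classical
  set n := p ^ (m + 1) with hn
  have hppos : 0 < p := hp.out.pos
  have hnpos : 0 < n := pow_pos hppos _
  have hpC0 : (p : C) ≠ 0 := by
    intro h
    rw [h, norm_zero] at hpC
    have : (0:ℝ) < (p:ℝ)⁻¹ := by positivity
    linarith [this, hpC]
  haveI : NeZero ((n : ℕ) : C) := by
    refine ⟨?_⟩
    rw [hn]
    push_cast
    exact pow_ne_zero _ hpC0
  have hdeg : (Polynomial.cyclotomic n C).degree ≠ 0 := by
    rw [Polynomial.degree_cyclotomic]
    exact_mod_cast (Nat.totient_pos.2 hnpos).ne'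
  obtain ⟨ζ, hroot⟩ := IsAlgClosed.exists_root _ hdeg
  have hζ : IsPrimitiveRoot ζ n := Polynomial.isRoot_cyclotomic_iff.1 hroot
  have hζ1 : ζ ^ n = 1 := hζ.pow_eq_one
  have hζnorm : ‖ζ‖ = 1 := by
    refine aux_pow_eq_one (norm_nonneg ζ) hnpos.ne' ?_
    rw [← norm_pow, hζ1, norm_one]
  -- ‖ζ^a - 1‖ ≤ ‖ζ - 1‖
  have hle : ∀ a : ℕ, ‖ζ ^ a - 1‖ ≤ ‖ζ - 1‖ := by
    intro a
    have hid := geom_sum_mul ζ a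
    rw [← hid, norm_mul]
    have hsum : ‖∑ i ∈ Finset.range a, ζ ^ i‖ ≤ 1 := by
      refine aux_sum_le hna _ _ zero_le_one fun i _ => ?_
      rw [norm_pow, hζnorm, one_pow]
    nlinarith [norm_nonneg (ζ - 1), hsum, norm_nonneg (∑ i ∈ Finset.range a, ζ ^ i)]
  have hall : ∀ μ ∈ primitiveRoots n C, ‖μ - 1‖ = ‖ζ - 1‖ := by
    intro μ hμ
    have hμprim : IsPrimitiveRoot μ n := (mem_primitiveRoots hnpos).1 hμ
    haveI : NeZero n := ⟨hnpos.ne'⟩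
    obtain ⟨i, -, hi⟩ := hζ.eq_pow_of_pow_eq_one hμprim.pow_eq_one
    obtain ⟨j, -, hj⟩ := hμprim.eq_pow_of_pow_eq_one hζ1
    have h1 : ‖μ - 1‖ ≤ ‖ζ - 1‖ := by rw [← hi]; exact hle i
    have h2 : ‖ζ - 1‖ ≤ ‖μ - 1‖ := by
      rw [← hj]
      -- same argument with μ
      have hμnorm : ‖μ‖ = 1 := by
        refine aux_pow_eq_one (norm_nonneg μ) hnpos.ne' ?_
        rw [← norm_pow, hμprim.pow_eq_one, norm_one]
      have hidμ := geom_sum_mul μ j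
      rw [← hidμ, norm_mul]
      have hsum : ‖∑ i ∈ Finset.range j, μ ^ i‖ ≤ 1 := by
        refine aux_sum_le hna _ _ zero_le_one fun i _ => ?_
        rw [norm_pow, hμnorm, one_pow]
      nlinarith [norm_nonneg (μ - 1), hsum, norm_nonneg (∑ i ∈ Finset.range j, μ ^ i)]
    linarith
  -- product formula
  have hprod : (p : C) = ∏ μ ∈ primitiveRoots n C, (1 - μ) := by
    have h1 := Polynomial.eval_one_cyclotomic_prime_pow (R := C) (p := p) m
    rw [Polynomial.cyclotomic_eq_prod_X_sub_primitiveRoots hζ] at h1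
    rw [← h1, Polynomial.eval_prod]
    simp
  have hnormprod : (p : ℝ)⁻¹ = ‖ζ - 1‖ ^ n.totient := by
    have h2 : ‖(p : C)‖ = ∏ μ ∈ primitiveRoots n C, ‖(1 : C) - μ‖ := by
      rw [hprod, norm_prod]
    rw [hpC] at h2
    rw [h2]
    have h3 : ∀ μ ∈ primitiveRoots n C, ‖(1:C) - μ‖ = ‖ζ - 1‖ := by
      intro μ hμ
      rw [norm_sub_rev]
      exact hall μ hμ
    rw [Finset.prod_congr rfl h3, Finset.prod_const, hζ.card_primitiveRoots]
  have htot : n.totient = p ^ m * (p - 1) := by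
    rw [hn, Nat.totient_prime_pow hp.out (Nat.succ_pos m)]
    simp
  have hpinv1 : (p : ℝ)⁻¹ < 1 := by
    rw [inv_lt_one_iff₀]
    right
    exact_mod_cast hp.out.one_lt
  have hpinv0 : (0:ℝ) < (p:ℝ)⁻¹ := by positivity
  have htotpos : 0 < n.totient := Nat.totient_pos.2 hnpos
  refine ⟨ζ, hζ1, ?_, ?_, ?_⟩
  · rw [← htot, ← hnormprod]
  · by_contra h
    push_neg at h
    have : ‖ζ - 1‖ = 0 := le_antisymm h (norm_nonneg _)
    rw [this, zero_pow htotpos.ne'] at hnormprod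
    linarith
  · by_contra h
    push_neg at h
    have : (1:ℝ) ≤ ‖ζ - 1‖ ^ n.totient := one_le_pow₀ h
    linarith [hnormprod ▸ this]

lemma aux_finsupp_finite (n N : ℕ) : {d : Fin n →₀ ℕ | ∑ j, d j ≤ N}.Finite := by
  classical
  have himg : {d : Fin n →₀ ℕ | ∑ j, d j ≤ N} ⊆
      (fun d : Fin n →₀ ℕ => (d : Fin n → ℕ)) ⁻¹' (Set.univ.pi fun _ => Set.Iic N) := by
    intro d hd
    simp only [Set.mem_setOf_eq] at hd
    intro j _
    simp only [Set.mem_Iic]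
    calc d j ≤ ∑ i, d i := Finset.single_le_sum (fun i _ => Nat.zero_le _) (Finset.mem_univ j)
      _ ≤ N := hd
  have hfin : (Set.univ.pi fun _ : Fin n => Set.Iic N).Finite :=
    Set.Finite.pi fun _ => Set.finite_Iic N
  refine Set.Finite.subset (Set.Finite.preimage ?_ hfin) himg
  intro d _ d' _ h
  exact DFunLike.coe_injective h


set_option maxHeartbeats 2000000

/-- Let `L` be a finite extension of `ℚ_p` and let `C` be a model of `ℂ_p`
(a complete algebraically closed normed field isometrically containing `L`).  Let
`Σ_n ⊂ O_C^n` be the set of points `(ζ₁ - 1, …, ζ_n - 1)` with each `ζᵢ` a root of unity of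
`p`-power order.  If `f ∈ O_L⟦X₁, …, X_n⟧ ⊗ L` (a multivariable power series with bounded
coefficients) vanishes at all but finitely many points of `Σ_n`, then `f = 0`. -/
theorem mv_power_series_vanishing_on_padic_roots_of_unity
    (p : ℕ) [hp : Fact p.Prime]
    (L : Type*) [NormedField L] [Algebra ℚ_[p] L] [FiniteDimensional ℚ_[p] L]
    (hL : ∀ x : ℚ_[p], ‖algebraMap ℚ_[p] L x‖ = ‖x‖)
    (C : Type*) [NormedField C] [CompleteSpace C] [IsAlgClosed C]
    (σ : L →+* C) (hσ : ∀ x : L, ‖σ x‖ = ‖x‖)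
    (n : ℕ) (hn : 1 ≤ n) (f : MvPowerSeries (Fin n) L)
    (hbd : ∃ B : ℝ, ∀ d : Fin n →₀ ℕ, ‖MvPowerSeries.coeff d f‖ ≤ B)
    (hvan : {x : Fin n → C |
        (∀ i, ∃ k : ℕ, (x i + 1) ^ p ^ k = 1) ∧
        ∑' d : Fin n →₀ ℕ, σ (MvPowerSeries.coeff d f) * ∏ i, x i ^ d i ≠ 0}.Finite) :
    f = 0 := by
  classical
  by_contra hf
  have hp2 : 2 ≤ p := hp.out.two_le
  have hppos : 0 < p := by omega
  haveI : Nonempty (Fin n) := ⟨⟨0, hn⟩⟩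
  -- norms of naturals are ≤ 1 in L and C
  have hnatL : ∀ m : ℕ, ‖(m : L)‖ ≤ 1 := by
    intro m
    rw [show ((m : L)) = algebraMap ℚ_[p] L (m : ℚ_[p]) by rw [map_natCast], hL]
    have : ((m : ℚ_[p])) = ((m : ℤ) : ℚ_[p]) := by push_cast; ring
    rw [this]
    exact Padic.norm_int_le_one _
  have hnaL : ∀ x y : L, ‖x + y‖ ≤ max ‖x‖ ‖y‖ := aux_nonarch hnatL
  have hnatC : ∀ m : ℕ, ‖(m : C)‖ ≤ 1 := by
    intro m
    rw [show ((m : C)) = σ (m : L) by rw [map_natCast], hσ]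
    exact hnatL m
  have hnaC : ∀ x y : C, ‖x + y‖ ≤ max ‖x‖ ‖y‖ := aux_nonarch hnatC
  have hpC : ‖(p : C)‖ = (p : ℝ)⁻¹ := by
    rw [show ((p : C)) = σ (p : L) by rw [map_natCast], hσ,
      show ((p : L)) = algebraMap ℚ_[p] L (p : ℚ_[p]) by rw [map_natCast], hL]
    exact Padic.norm_p
  -- L is a proper space
  letI : NormedSpace ℚ_[p] L :=
    ⟨fun c x => by rw [Algebra.smul_def, norm_mul, hL]⟩
  haveI : ProperSpace L := FiniteDimensional.proper ℚ_[p] L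
  -- coefficients
  set a : (Fin n →₀ ℕ) → L := fun d => MvPowerSeries.coeff d f with ha
  obtain ⟨B, hB⟩ := hbd
  obtain ⟨d₁, hd₁⟩ : ∃ d, a d ≠ 0 := by
    by_contra h
    push_neg at h
    exact hf (MvPowerSeries.ext fun d => by simpa [ha] using h d)
  obtain ⟨d₀, ρ, hApos, hρ0, hρA, hgap⟩ := aux_max_gap hnaL a B hB d₁ hd₁
  set A := ‖a d₀‖ with hA
  -- lexicographically minimal coefficient of maximal norm
  have hwf : WellFounded ((· < ·) : Lex (Fin n →₀ ℕ) → Lex (Fin n →₀ ℕ) → Prop) :=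
    IsWellFounded.wf
  obtain ⟨δ', hδ'S, hδ'min⟩ := hwf.has_min {d : Lex (Fin n →₀ ℕ) | ‖a (ofLex d)‖ = A}
    ⟨toLex d₀, rfl⟩
  set δ : Fin n →₀ ℕ := ofLex δ' with hδdef
  have hδA : ‖a δ‖ = A := hδ'S
  set W : ℕ := ∑ j, δ j with hW
  set b : ℕ := W + 2 with hb
  have hpbW : W + 1 < p ^ b := by
    calc W + 1 < 2 ^ (W + 2) := by
          have := Nat.lt_two_pow_self (n := W)
          have h2 : (2:ℕ) ^ W < 2 ^ (W + 2) := by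
            apply Nat.pow_lt_pow_right (by omega) (by omega)
          omega
      _ ≤ p ^ b := Nat.pow_le_pow_left hp2 _
  -- the weights
  set t : Fin n → ℕ := fun j => p ^ ((n - 1 - (j : ℕ)) * b) with ht
  have htpos : ∀ j, 0 < t j := fun j => Nat.pow_pos hppos
  have htlast : ∀ j : Fin n, (j : ℕ) = n - 1 → t j = 1 := by
    intro j hj
    simp [ht, hj]
  -- hierarchy : ∑_{j > i} t j * δ j < t i
  have hhier : ∀ i : Fin n, ∑ j ∈ Finset.Ioi i, t j * δ j < t i := by
    intro i
    by_cases hi : (i : ℕ) = n - 1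
    · have : Finset.Ioi i = ∅ := by
        rw [Finset.eq_empty_iff_forall_notMem]
        intro j hj
        rw [Finset.mem_Ioi] at hj
        have := hj
        have h1 : (i:ℕ) < (j:ℕ) := this
        have h2 : (j:ℕ) < n := j.isLt
        omega
      rw [this, Finset.sum_empty]
      exact htpos i
    · have hilt : (i : ℕ) < n - 1 := by have := i.isLt; omega
      have hstep : ∀ j ∈ Finset.Ioi i, t j * δ j ≤ p ^ ((n - 1 - (i:ℕ) - 1) * b) * δ j := by
        intro j hj
        rw [Finset.mem_Ioi] at hj
        have h1 : (i:ℕ) < (j:ℕ) := hj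
        have h2 : n - 1 - (j:ℕ) ≤ n - 1 - (i:ℕ) - 1 := by omega
        exact Nat.mul_le_mul_right _ (Nat.pow_le_pow_right hppos (Nat.mul_le_mul_right _ h2))
      calc ∑ j ∈ Finset.Ioi i, t j * δ j
          ≤ ∑ j ∈ Finset.Ioi i, p ^ ((n - 1 - (i:ℕ) - 1) * b) * δ j :=
            Finset.sum_le_sum hstep
        _ = p ^ ((n - 1 - (i:ℕ) - 1) * b) * ∑ j ∈ Finset.Ioi i, δ j := by
            rw [Finset.mul_sum]
        _ ≤ p ^ ((n - 1 - (i:ℕ) - 1) * b) * W := by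
            apply Nat.mul_le_mul_left
            rw [hW]
            exact Finset.sum_le_sum_of_subset (Finset.subset_univ _)
        _ < p ^ ((n - 1 - (i:ℕ) - 1) * b) * p ^ b := by
            apply mul_lt_mul_of_pos_left (by omega : W < p ^ b) (Nat.pow_pos hppos)
        _ = p ^ ((n - 1 - (i:ℕ) - 1) * b + b) := (pow_add p _ b).symm
        _ = t i := by
            rw [ht]
            congr 1
            have : n - 1 - (i:ℕ) - 1 + 1 = n - 1 - (i:ℕ) := by omega
            calc (n - 1 - (i:ℕ) - 1) * b + b = (n - 1 - (i:ℕ) - 1 + 1) * b := by ring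
              _ = (n - 1 - (i:ℕ)) * b := by rw [this]
  -- t is maximal at 0-ish : t j ≤ t i₀ for i₀ = ⟨0, _⟩
  set i₀ : Fin n := ⟨0, hn⟩ with hi₀
  have htmax : ∀ j : Fin n, t j ≤ t i₀ := by
    intro j
    apply Nat.pow_le_pow_right hppos
    apply Nat.mul_le_mul_right
    simp [hi₀]
  -- roots of unity
  obtain ⟨ζf, hζf⟩ : ∃ g : ℕ → C, ∀ m : ℕ, (g m) ^ p ^ (m + 1) = 1 ∧
      ‖g m - 1‖ ^ (p ^ m * (p - 1)) = (p : ℝ)⁻¹ ∧ 0 < ‖g m - 1‖ ∧ ‖g m - 1‖ < 1 :=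
    ⟨fun m => (aux_root hnaC hpC m).choose, fun m => (aux_root hnaC hpC m).choose_spec⟩
  -- the points
  set x : ℕ → Fin n → C := fun M i => ζf (M + (i : ℕ) * b) - 1 with hx
  -- choose the threshold K₀
  have hA0 : 0 < A := hApos
  obtain ⟨K₀, hK₀⟩ : ∃ K₀ : ℕ, ∀ k : ℕ, K₀ ≤ k → ρ ^ k * ((p:ℝ)⁻¹)⁻¹ ^ W < A ^ k := by
    rcases eq_or_lt_of_le hρ0 with hρ0' | hρpos
    · refine ⟨1, fun k hk => ?_⟩
      rw [← hρ0', zero_pow (by omega), zero_mul]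
      positivity
    · have hratio : ρ / A < 1 := (div_lt_one hA0).2 hρA
      have hratio0 : 0 ≤ ρ / A := by positivity
      have htend := tendsto_pow_atTop_nhds_zero_of_lt_one hratio0 hratio
      have hev : ∀ᶠ k in Filter.atTop,
          (ρ / A) ^ k < ((p:ℝ)⁻¹) ^ W := by
        apply htend.eventually (eventually_lt_nhds (by positivity))
      rw [Filter.eventually_atTop] at hev
      obtain ⟨K₀, hK⟩ := hev
      refine ⟨K₀, fun k hk => ?_⟩
      have h1 := hK k hk
      rw [div_pow, div_lt_iff₀ (by positivity)] at h1
      calc ρ ^ k * ((p:ℝ)⁻¹)⁻¹ ^ W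
          = ρ ^ k / ((p:ℝ)⁻¹) ^ W := by
            rw [div_eq_mul_inv, ← inv_pow]
        _ < A ^ k := by
            rw [div_lt_iff₀ (by positivity)]
            calc ρ ^ k < ((p:ℝ)⁻¹) ^ W * A ^ k := h1
              _ = A ^ k * ((p:ℝ)⁻¹) ^ W := by ring
  -- the key claim : for all M ≥ K₀ the point x M is "bad"
  have key : ∀ M : ℕ, K₀ ≤ M →
      (∀ i, ∃ k : ℕ, (x M i + 1) ^ p ^ k = 1) ∧
      ∑' d : Fin n →₀ ℕ, σ (a d) * ∏ i, x M i ^ d i ≠ 0 := by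
    intro M hM
    -- local data
    set τ : Fin n → ℕ := fun j => p ^ (M + (j : ℕ) * b) * (p - 1) with hτ
    set T : ℕ := p ^ (M + (n - 1) * b) * (p - 1) with hT
    have hTpos : 0 < T := Nat.mul_pos (Nat.pow_pos hppos) (by omega)
    have hτt : ∀ j, τ j * t j = T := by
      intro j
      have hjj : (j:ℕ) + (n - 1 - (j:ℕ)) = n - 1 := by have := j.isLt; omega
      show p ^ (M + (j:ℕ) * b) * (p - 1) * p ^ ((n - 1 - (j:ℕ)) * b)
          = p ^ (M + (n - 1) * b) * (p - 1)
      have hexp : M + (j:ℕ) * b + (n - 1 - (j:ℕ)) * b = M + (n - 1) * b := by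
        rw [Nat.add_assoc, ← Nat.add_mul, hjj]
      calc p ^ (M + (j:ℕ) * b) * (p - 1) * p ^ ((n - 1 - (j:ℕ)) * b)
          = p ^ (M + (j:ℕ) * b) * p ^ ((n - 1 - (j:ℕ)) * b) * (p - 1) := by ring
        _ = p ^ (M + (j:ℕ) * b + (n - 1 - (j:ℕ)) * b) * (p - 1) := by
            rw [← pow_add]
        _ = p ^ (M + (n - 1) * b) * (p - 1) := by rw [hexp]
    set r : Fin n → ℝ := fun j => ‖x M j‖ with hr
    have hrdef : ∀ j, r j = ‖ζf (M + (j:ℕ) * b) - 1‖ := fun j => rfl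
    have hrτ : ∀ j, r j ^ τ j = (p:ℝ)⁻¹ := by
      intro j
      rw [hrdef j, hτ]
      exact (hζf (M + (j:ℕ)*b)).2.1
    have hr0 : ∀ j, 0 < r j := fun j => (hζf (M + (j:ℕ)*b)).2.2.1
    have hr1 : ∀ j, r j < 1 := fun j => (hζf (M + (j:ℕ)*b)).2.2.2
    have hrT : ∀ j, r j ^ T = ((p:ℝ)⁻¹) ^ t j := by
      intro j
      rw [← hτt j, pow_mul, hrτ j]
    -- the "P" and "w" functions
    set P : (Fin n → ℕ) → ℝ := fun c => ∏ j, r j ^ c j with hP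
    set w : (Fin n → ℕ) → ℕ := fun c => ∑ j, t j * c j with hwfun
    have hP0 : ∀ c, 0 < P c := fun c => Finset.prod_pos fun j _ => pow_pos (hr0 j) _
    have hP1 : ∀ c, P c ≤ 1 := by
      intro c
      apply Finset.prod_le_one
      · intro j _; positivity
      · intro j _; exact pow_le_one₀ (hr0 j).le (hr1 j).le
    have hPT : ∀ c, P c ^ T = ((p:ℝ)⁻¹) ^ w c := by
      intro c
      rw [hP, hwfun, ← Finset.prod_pow]
      rw [← Finset.prod_pow_eq_pow_sum]
      apply Finset.prod_congr rfl
      intro j _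
      rw [pow_right_comm, hrT j, ← pow_mul]
    have hpinv0 : (0:ℝ) < (p:ℝ)⁻¹ := by positivity
    have hpinv1 : (p:ℝ)⁻¹ < 1 := by
      rw [inv_lt_one_iff₀]; right; exact_mod_cast by omega
    have hPle : ∀ c c', w c' ≤ w c → P c ≤ P c' := by
      intro c c' hcc
      have h1 : P c ^ T ≤ P c' ^ T := by
        rw [hPT, hPT]
        exact pow_le_pow_of_le_one hpinv0.le hpinv1.le hcc
      exact (pow_le_pow_iff_left₀ (hP0 c).le (hP0 c').le hTpos.ne').1 h1
    -- weight inequality for lex-larger indices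
    have hwgt : ∀ d : Fin n →₀ ℕ, ‖a d‖ = A → d ≠ δ → w δ + 1 ≤ w d := by
      intro d hdA hdδ
      have hlex : δ' < toLex d := by
        rcases lt_or_ge δ' (toLex d) with h | h
        · exact h
        rcases eq_or_lt_of_le h with h' | h'
        · exact absurd (by rw [hδdef, ← h']; rfl : d = δ) hdδ
        · exact absurd h' (hδ'min (toLex d) hdA)
      obtain ⟨i, hprev, hlt⟩ := hlex
      simp only [ofLex_toLex] at hprev hlt
      rw [← hδdef] at hprev hlt
      have hsplit : ∀ e : Fin n → ℕ, ∑ j, t j * e j =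
          (∑ j ∈ Finset.Iio i, t j * e j) + t i * e i + ∑ j ∈ Finset.Ioi i, t j * e j := by
        intro e
        have hunion : Finset.univ = (Finset.Iic i) ∪ (Finset.Ioi i) := by
          ext j
          rw [Finset.mem_union, Finset.mem_Iic, Finset.mem_Ioi]
          simp only [Finset.mem_univ, true_iff]
          exact le_or_gt j i
        have hdisj : Disjoint (Finset.Iic i) (Finset.Ioi i) := by
          rw [Finset.disjoint_left]
          intro j hj1 hj2
          rw [Finset.mem_Iic] at hj1
          rw [Finset.mem_Ioi] at hj2
          exact absurd hj1 (not_le.2 hj2)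
        rw [show (Finset.univ : Finset (Fin n)) = (Finset.Iic i) ∪ (Finset.Ioi i) from hunion,
          Finset.sum_union hdisj]
        congr 1
        rw [← Finset.Iio_insert, Finset.sum_insert (by simp)]
        ring
      rw [hwfun]
      simp only
      rw [hsplit (fun j => d j), hsplit (fun j => δ j)]
      have he1 : ∑ j ∈ Finset.Iio i, t j * δ j = ∑ j ∈ Finset.Iio i, t j * d j := by
        apply Finset.sum_congr rfl
        intro j hj
        rw [Finset.mem_Iio] at hj
        rw [hprev j hj]
      have he2 : t i * δ i + t i ≤ t i * d i := by
        have : δ i + 1 ≤ d i := hlt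
        calc t i * δ i + t i = t i * (δ i + 1) := by ring
          _ ≤ t i * d i := Nat.mul_le_mul_left _ this
      have he3 : ∑ j ∈ Finset.Ioi i, t j * δ j + 1 ≤ t i := hhier i
      omega
    -- bound : w δ ≤ t i₀ * W
    have hwδ : w (fun j => δ j) ≤ t i₀ * W := by
      rw [hwfun, hW]
      simp only
      rw [Finset.mul_sum]
      apply Finset.sum_le_sum
      intro j _
      exact Nat.mul_le_mul_right _ (htmax j)
    -- P δ ≥ r i₀ ^ W
    have hPδ : r i₀ ^ W ≤ P (fun j => δ j) := by
      have h1 : (r i₀ ^ W) ^ T = ((p:ℝ)⁻¹) ^ (t i₀ * W) := by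
        rw [← pow_mul, mul_comm W T, pow_mul, hrT i₀, ← pow_mul]
      have h2 : P (fun j => δ j) ^ T = ((p:ℝ)⁻¹) ^ w (fun j => δ j) := hPT _
      have h3 : ((p:ℝ)⁻¹) ^ (t i₀ * W) ≤ ((p:ℝ)⁻¹) ^ w (fun j => δ j) := by
        exact pow_le_pow_of_le_one hpinv0.le hpinv1.le hwδ
      have h4 : (r i₀ ^ W) ^ T ≤ P (fun j => δ j) ^ T := by rw [h1, h2]; linarith [h3]
      exact (pow_le_pow_iff_left₀ (by positivity) (hP0 _).le hTpos.ne').1 h4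
    -- the ρ condition : ρ < A * P δ
    have hρcond : ρ < A * P (fun j => δ j) := by
      have hτi₀ : K₀ ≤ τ i₀ := by
        have h1 : M < 2 ^ M := Nat.lt_two_pow_self (n := M)
        have h2 : (2:ℕ) ^ M ≤ p ^ M := Nat.pow_le_pow_left hp2 M
        have h3 : p ^ M ≤ p ^ (M + (i₀:ℕ) * b) := Nat.pow_le_pow_right hppos (by omega)
        have h4 : p ^ (M + (i₀:ℕ) * b) ≤ τ i₀ := by
          rw [hτ]
          calc p ^ (M + (i₀:ℕ) * b) = p ^ (M + (i₀:ℕ) * b) * 1 := (mul_one _).symm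
            _ ≤ p ^ (M + (i₀:ℕ) * b) * (p - 1) := Nat.mul_le_mul_left _ (by omega)
        omega
      have hcontra : ρ < A * r i₀ ^ W := by
        by_contra hcon
        push_neg at hcon
        -- A * r i₀ ^ W ≤ ρ ; raise to the power τ i₀
        have h0 : (0:ℝ) < A * r i₀ ^ W := mul_pos hApos (pow_pos (hr0 i₀) W)
        have h4 : (A * r i₀ ^ W) ^ τ i₀ ≤ ρ ^ τ i₀ := by
          apply pow_le_pow_left₀ h0.le hcon
        have e1 : (A * r i₀ ^ W) ^ τ i₀ = A ^ τ i₀ * ((r i₀ ^ τ i₀) ^ W) := by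
          rw [mul_pow, pow_right_comm]
        rw [e1, hrτ i₀] at h4
        have h5 := hK₀ (τ i₀) hτi₀
        have h6 : ρ ^ τ i₀ * ((p:ℝ)⁻¹)⁻¹ ^ W < A ^ τ i₀ := h5
        have h7 : A ^ τ i₀ * ((p:ℝ)⁻¹) ^ W ≤ ρ ^ τ i₀ := h4
        have h8 : (0:ℝ) < ((p:ℝ)⁻¹) ^ W := by positivity
        have h9 : A ^ τ i₀ ≤ ρ ^ τ i₀ * (((p:ℝ)⁻¹) ^ W)⁻¹ := by
          rw [← le_div_iff₀ h8] at h7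
          rw [div_eq_mul_inv] at h7
          exact h7
        rw [← inv_pow] at h9
        linarith
      calc ρ < A * r i₀ ^ W := hcontra
        _ ≤ A * P (fun j => δ j) := by
            apply mul_le_mul_of_nonneg_left hPδ hA0.le
    -- summability
    set u : (Fin n →₀ ℕ) → C := fun d => σ (a d) * ∏ i, x M i ^ d i with hu
    have hunorm : ∀ d : Fin n →₀ ℕ, ‖u d‖ = ‖a d‖ * P (fun j => d j) := by
      intro d
      rw [hu]
      simp only
      rw [norm_mul, hσ, norm_prod]
      congr 1
      apply Finset.prod_congr rfl
      intro j _
      rw [norm_pow]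
    -- sup of the r's
    set rmax : ℝ := Finset.univ.sup' Finset.univ_nonempty r with hrmax
    have hrmax1 : rmax < 1 := by
      rw [hrmax, Finset.sup'_lt_iff]
      exact fun j _ => hr1 j
    have hrmax0 : 0 < rmax := lt_of_lt_of_le (hr0 i₀) (Finset.le_sup' r (Finset.mem_univ i₀))
    have hPrmax : ∀ d : Fin n →₀ ℕ, P (fun j => d j) ≤ rmax ^ (∑ j, d j) := by
      intro d
      rw [hP]
      simp only
      rw [← Finset.prod_pow_eq_pow_sum]
      apply Finset.prod_le_prod
      · intro j _; positivity
      · intro j _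
        exact pow_le_pow_left₀ (hr0 j).le (Finset.le_sup' r (Finset.mem_univ j)) _
    have hsummable : Summable u := by
      apply aux_summable hnaC
      intro ε hε
      have htnd := tendsto_pow_atTop_nhds_zero_of_lt_one hrmax0.le hrmax1
      have hev : ∀ᶠ k in Filter.atTop, rmax ^ k < ε / (A + 1) := by
        apply htnd.eventually (eventually_lt_nhds (by positivity))
      rw [Filter.eventually_atTop] at hev
      obtain ⟨N, hN⟩ := hev
      apply Set.Finite.subset (aux_finsupp_finite n N)
      intro d hd
      simp only [Set.mem_setOf_eq] at hd ⊢
      by_contra hdN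
      push_neg at hdN
      have h1 : ‖u d‖ ≤ A * rmax ^ (∑ j, d j) := by
        rw [hunorm d]
        have h2 : ‖a d‖ ≤ A := by
          rcases hgap d with h | h
          · rw [h]
          · linarith
        apply mul_le_mul h2 (hPrmax d) (hP0 _).le hA0.le
      have h3 : rmax ^ (∑ j, d j) ≤ rmax ^ (N + 1) :=
        pow_le_pow_of_le_one hrmax0.le hrmax1.le (by omega)
      have h4 := hN (N + 1) (by omega)
      have h5 : ‖u d‖ < ε := by
        calc ‖u d‖ ≤ A * rmax ^ (∑ j, d j) := h1
          _ ≤ A * rmax ^ (N+1) := by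
              apply mul_le_mul_of_nonneg_left h3 hA0.le
          _ < A * (ε / (A+1)) := by
              apply mul_lt_mul_of_pos_left h4 hA0
          _ ≤ ε := by
              rw [mul_div_assoc']
              rw [div_le_iff₀ (by positivity)]
              nlinarith [hε]
      linarith
    -- the dominant term
    have hPδpos : 0 < P (fun j => δ j) := hP0 _
    have huδ : ‖u δ‖ = A * P (fun j => δ j) := by rw [hunorm δ, hδA]
    -- the last index
    set ilast : Fin n := ⟨n - 1, by omega⟩ with hilast
    have htilast : t ilast = 1 := htlast ilast rfl
    have hrlast1 : r ilast < 1 := hr1 ilast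
    have hrlast0 : 0 < r ilast := hr0 ilast
    -- bound for the other terms
    set s' : ℝ := max ρ (A * P (fun j => δ j) * r ilast) with hs'
    have hs'0 : 0 ≤ s' := le_trans hρ0 (le_max_left _ _)
    have hbound : ∀ d : Fin n →₀ ℕ, d ≠ δ → ‖u d‖ ≤ s' := by
      intro d hdδ
      rcases hgap d with hcase | hcase
      · -- ‖a d‖ = A : use lex minimality
        have h1 := hwgt d (by rw [hcase, hA]) hdδ
        -- P d ≤ P δ * r ilast
        have h2 : (P (fun j => δ j) * r ilast) ^ T = ((p:ℝ)⁻¹) ^ (w (fun j => δ j) + 1) := by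
          rw [mul_pow, hPT, hrT, htilast, pow_one, ← pow_succ]
        have h3 : P (fun j => d j) ^ T ≤ (P (fun j => δ j) * r ilast) ^ T := by
          rw [h2, hPT]
          apply pow_le_pow_of_le_one hpinv0.le hpinv1.le
          exact h1
        have h4 : P (fun j => d j) ≤ P (fun j => δ j) * r ilast :=
          (pow_le_pow_iff_left₀ (hP0 _).le (by positivity) hTpos.ne').1 h3
        calc ‖u d‖ = ‖a d‖ * P (fun j => d j) := hunorm d
          _ = A * P (fun j => d j) := by rw [hcase, hA]
          _ ≤ A * (P (fun j => δ j) * r ilast) := mul_le_mul_of_nonneg_left h4 hA0.le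
          _ = A * P (fun j => δ j) * r ilast := by ring
          _ ≤ s' := le_max_right _ _
      · -- small coefficient
        calc ‖u d‖ = ‖a d‖ * P (fun j => d j) := hunorm d
          _ ≤ ρ * 1 := mul_le_mul hcase (hP1 _) (hP0 _).le hρ0
          _ = ρ := mul_one ρ
          _ ≤ s' := le_max_left _ _
    have hs'lt : s' < ‖u δ‖ := by
      rw [huδ, hs']
      apply max_lt hρcond
      have := mul_lt_of_lt_one_right (by positivity : (0:ℝ) < A * P (fun j => δ j)) hrlast1
      linarith
    constructor
    · intro i
      refine ⟨M + (i:ℕ) * b + 1, ?_⟩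
      rw [hx]
      simp only [sub_add_cancel]
      exact (hζf (M + (i:ℕ)*b)).1
    · -- the tsum is nonzero
      intro hzero
      have hsplit := Summable.tsum_eq_add_tsum_ite hsummable δ
      rw [hzero] at hsplit
      -- the remainder
      set R := ∑' d : Fin n →₀ ℕ, if d = δ then 0 else u d with hR
      have hRsummable : Summable (fun d : Fin n →₀ ℕ => if d = δ then 0 else u d) := by
        have h1 : Summable (fun d : Fin n →₀ ℕ => if d = δ then u d else 0) := by
          apply summable_of_ne_finset_zero (s := {δ})
          intro d hd
          rw [if_neg (by simpa using hd)]
        have h2 := hsummable.sub h1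
        apply h2.congr
        intro d
        by_cases hd : d = δ <;> simp [hd]
      have hRle : ‖R‖ ≤ s' := by
        apply aux_tsum_le hnaC _ hRsummable hs'0
        intro d
        by_cases hd : d = δ
        · simp [hd, hs'0]
        · rw [if_neg hd]
          exact hbound d hd
      have huδR : u δ = -R := by
        have : (0:C) = u δ + R := hsplit
        linear_combination -this
      have : ‖u δ‖ = ‖R‖ := by rw [huδR, norm_neg]
      linarith [hRle, hs'lt, this]
  -- conclusion : infinitely many bad points
  have hinj : Function.Injective (fun k : ℕ => x (K₀ + k)) := by
    intro k k' hkk'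
    simp only at hkk'
    have h1 : x (K₀ + k) i₀ = x (K₀ + k') i₀ := by rw [hkk']
    rw [hx] at h1
    simp only [hi₀] at h1
    -- norms
    have h2 : ‖ζf (K₀ + k + (0:ℕ) * b) - 1‖ = ‖ζf (K₀ + k' + (0:ℕ) * b) - 1‖ := by
      rw [h1]
    simp only [Nat.zero_mul, Nat.add_zero] at h1 h2
    set rk := ‖ζf (K₀ + k) - 1‖ with hrk
    have e1 : rk ^ (p ^ (K₀ + k) * (p-1)) = (p:ℝ)⁻¹ := (hζf (K₀ + k)).2.1
    have e2 : rk ^ (p ^ (K₀ + k') * (p-1)) = (p:ℝ)⁻¹ := by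
      rw [h2]
      exact (hζf (K₀ + k')).2.1
    have hrk0 : 0 < rk := (hζf (K₀ + k)).2.2.1
    have hrk1 : rk < 1 := (hζf (K₀ + k)).2.2.2
    by_contra hne
    have hkk : k ≠ k' := fun h => hne (by rw [h])
    have hlt : p ^ (K₀ + k) * (p-1) ≠ p ^ (K₀ + k') * (p-1) := by
      rcases Nat.lt_or_ge k k' with h | h
      · have : p ^ (K₀ + k) < p ^ (K₀ + k') := Nat.pow_lt_pow_right (by omega) (by omega)
        have hp1 : 0 < p - 1 := by omega
        exact Nat.ne_of_lt (mul_lt_mul_of_pos_right this hp1)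
      · have hlt' : k' < k := by omega
        have : p ^ (K₀ + k') < p ^ (K₀ + k) := Nat.pow_lt_pow_right (by omega) (by omega)
        have hp1 : 0 < p - 1 := by omega
        exact (Nat.ne_of_lt (mul_lt_mul_of_pos_right this hp1)).symm
    rcases Nat.lt_or_ge (p ^ (K₀ + k) * (p-1)) (p ^ (K₀ + k') * (p-1)) with h | h
    · have := pow_lt_pow_right_of_lt_one₀ hrk0 hrk1 h
      rw [e1, e2] at this
      exact lt_irrefl _ this
    · rcases eq_or_lt_of_le h with h' | h'
      · exact hlt h'.symm
      · have := pow_lt_pow_right_of_lt_one₀ hrk0 hrk1 h'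
        rw [e1, e2] at this
        exact lt_irrefl _ this
  have hmem : ∀ k : ℕ, x (K₀ + k) ∈ {y : Fin n → C |
      (∀ i, ∃ k : ℕ, (y i + 1) ^ p ^ k = 1) ∧
      ∑' d : Fin n →₀ ℕ, σ (MvPowerSeries.coeff d f) * ∏ i, y i ^ d i ≠ 0} := by
    intro k
    obtain ⟨h1, h2⟩ := key (K₀ + k) (by omega)
    exact ⟨h1, h2⟩
  exact (Set.infinite_of_injective_forall_mem hinj hmem) hvan
end

section
/- Let p be a prime and L a finite extension of ℚ_p with ring of integers O_L. If f ∈ O_L⟦X⟧ vanishes at ζ − 1 for infinitely many roots of unity ζ of p-power order (the values being taken in C_p, where the series converges since |ζ−1| < 1), then f = 0. -/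
open Filter Topology

section AVhelpers
variable {C : Type*} [NormedField C] {p : ℕ}

lemma AV.finrange_dom [IsUltrametricDist C] {n M : ℕ} {g : ℕ → C} (hM : M ∈ Finset.range n)
    {c : ℝ} (hc0 : 0 ≤ c) (hlt : c < ‖g M‖)
    (h : ∀ m ∈ Finset.range n, m ≠ M → ‖g m‖ ≤ c) :
    ∑ m ∈ Finset.range n, g m ≠ 0 := by
  intro h0
  have h1 : g M + ∑ m ∈ (Finset.range n).erase M, g m = 0 := by
    rw [Finset.add_sum_erase _ _ hM]; exact h0
  have h2 : ‖∑ m ∈ (Finset.range n).erase M, g m‖ ≤ c :=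
    IsUltrametricDist.norm_sum_le_of_forall_le_of_nonneg hc0
      (fun i hi => h i (Finset.mem_of_mem_erase hi) (Finset.ne_of_mem_erase hi))
  rw [eq_neg_of_add_eq_zero_right h1, norm_neg] at h2
  exact absurd h2 (not_le.mpr hlt)

lemma AV.tsum_dom [IsUltrametricDist C] [CompleteSpace C] {g : ℕ → C} (hs : Summable g) {M : ℕ}
    {c : ℝ} (hc0 : 0 ≤ c) (hlt : c < ‖g M‖) (h : ∀ m, m ≠ M → ‖g m‖ ≤ c) :
    ∑' m, g m ≠ 0 := by
  intro h0
  have h1 := hs.tsum_eq_add_tsum_ite M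
  rw [h0] at h1
  have h2 : ‖∑' m, if m = M then 0 else g m‖ ≤ c :=
    IsUltrametricDist.norm_tsum_le_of_forall_le_of_nonneg hc0 (fun m => by
      by_cases hm : m = M
      · simp [hm, hc0]
      · simpa [hm] using h m hm)
  rw [eq_neg_of_add_eq_zero_right h1.symm, norm_neg] at h2
  exact absurd h2 (not_le.mpr hlt)


lemma AV.pow_sub_one_eq (x : C) (n : ℕ) :
    (x + 1) ^ n - 1 = x * ∑ i ∈ Finset.range n, x ^ i * ((n.choose (i+1)) : C) := by
  rw [add_pow]
  rw [Finset.sum_range_succ']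
  simp only [one_pow, mul_one, pow_zero, Nat.choose_zero_right, Nat.cast_one, one_mul]
  rw [add_sub_cancel_right, Finset.mul_sum]
  congr 1; ext i; ring


lemma AV.norm_natCast_dvd_le (hCp : ‖(p : C)‖ = (p:ℝ)⁻¹) (hCn : ∀ n : ℕ, ‖(n : C)‖ ≤ 1)
    {n : ℕ} (hd : p ∣ n) : ‖(n : C)‖ ≤ (p:ℝ)⁻¹ := by
  obtain ⟨m, rfl⟩ := hd
  rw [Nat.cast_mul, norm_mul, hCp]
  calc (p:ℝ)⁻¹ * ‖(m:C)‖ ≤ (p:ℝ)⁻¹ * 1 :=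
        mul_le_mul_of_nonneg_left (hCn m) (by positivity)
    _ = (p:ℝ)⁻¹ := mul_one _

lemma AV.root_norm_lt_one [IsUltrametricDist C] (hp : p.Prime)
    (hCp : ‖(p : C)‖ = (p:ℝ)⁻¹) (hCn : ∀ n : ℕ, ‖(n : C)‖ ≤ 1)
    {k : ℕ} {ζ : C} (hζ : ζ ^ p ^ k = 1) (hne : ζ ≠ 1) : ‖ζ - 1‖ < 1 := by
  by_contra hge
  push_neg at hge
  set t := ζ - 1 with ht
  have ht1 : t + 1 = ζ := by rw [ht]; ring
  have hk : k ≠ 0 := by rintro rfl; rw [pow_zero, pow_one] at hζ; exact hne hζ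
  set n := p ^ k with hn
  have hn2 : 2 ≤ n := by
    calc 2 ≤ p := hp.two_le
    _ = p ^ 1 := (pow_one p).symm
    _ ≤ p ^ k := Nat.pow_le_pow_right hp.pos (by omega)
  have htne : t ≠ 0 := sub_ne_zero.mpr hne
  have hB : t * ∑ i ∈ Finset.range n, t ^ i * ((n.choose (i+1)) : C) = 0 := by
    rw [← AV.pow_sub_one_eq, ht1, hζ, sub_self]
  have hB0 : ∑ i ∈ Finset.range n, t ^ i * ((n.choose (i+1)) : C) = 0 :=
    (mul_eq_zero.mp hB).resolve_left htne
  have ht0 : (0:ℝ) < ‖t‖ ^ (n-1) := pow_pos (by positivity) _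
  refine AV.finrange_dom (M := n - 1) (g := fun i => t ^ i * ((n.choose (i+1)) : C))
    (Finset.mem_range.mpr (by omega)) (c := (p:ℝ)⁻¹ * ‖t‖ ^ (n-1)) (by positivity) ?_ ?_ hB0
  · have hM : (fun i => t ^ i * ((n.choose (i+1)) : C)) (n-1) = t ^ (n-1) := by
      simp only []
      rw [show n - 1 + 1 = n by omega, Nat.choose_self, Nat.cast_one, mul_one]
    beta_reduce at hM
    rw [hM, norm_pow]
    have hpinv : (p:ℝ)⁻¹ < 1 := by
      rw [inv_lt_one_iff₀]; right; exact_mod_cast hp.one_lt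
    calc (p:ℝ)⁻¹ * ‖t‖ ^ (n-1) < 1 * ‖t‖ ^ (n-1) := by
          exact mul_lt_mul_of_pos_right hpinv ht0
      _ = ‖t‖ ^ (n-1) := one_mul _
  · intro m hm hmne
    rw [Finset.mem_range] at hm
    have hdvd : p ∣ n.choose (m+1) := hp.dvd_choose_pow (by omega) (by omega)
    rw [norm_mul, norm_pow]
    calc ‖t‖ ^ m * ‖((n.choose (m+1)) : C)‖ ≤ ‖t‖ ^ m * (p:ℝ)⁻¹ :=
          mul_le_mul_of_nonneg_left (AV.norm_natCast_dvd_le hCp hCn hdvd) (by positivity)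
      _ ≤ ‖t‖ ^ (n-1) * (p:ℝ)⁻¹ := by
          have := pow_le_pow_right₀ hge (show m ≤ n - 1 by omega)
          exact mul_le_mul_of_nonneg_right this (by positivity)
      _ = (p:ℝ)⁻¹ * ‖t‖ ^ (n-1) := mul_comm _ _

lemma AV.proot_norm_bound [IsUltrametricDist C] (hp : p.Prime)
    (hCp : ‖(p : C)‖ = (p:ℝ)⁻¹) (hCn : ∀ n : ℕ, ‖(n : C)‖ ≤ 1)
    {w : C} (hw : w ^ p = 1) (hne : w ≠ 1) :
    ‖w - 1‖ < 1 ∧ (p:ℝ)⁻¹ ≤ ‖w - 1‖ ^ (p - 1) := by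
  have h1 : ‖w - 1‖ < 1 :=
    AV.root_norm_lt_one hp hCp hCn (k := 1) (by simpa [pow_one] using hw) hne
  refine ⟨h1, ?_⟩
  by_contra hge; push_neg at hge
  set s := w - 1 with hs
  have hsne : s ≠ 0 := sub_ne_zero.mpr hne
  have hs1 : s + 1 = w := by rw [hs]; ring
  have hB : s * ∑ i ∈ Finset.range p, s ^ i * ((p.choose (i+1)) : C) = 0 := by
    rw [← AV.pow_sub_one_eq, hs1, hw, sub_self]
  have hB0 : ∑ i ∈ Finset.range p, s ^ i * ((p.choose (i+1)) : C) = 0 :=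
    (mul_eq_zero.mp hB).resolve_left hsne
  have hppos : (0:ℝ) < (p:ℝ)⁻¹ := by
    have := hp.pos; positivity
  refine AV.finrange_dom (M := 0) (g := fun i => s ^ i * ((p.choose (i+1)) : C))
    (Finset.mem_range.mpr hp.pos) (c := max (‖s‖ ^ (p-1)) ((p:ℝ)⁻¹ * ‖s‖))
    (le_max_of_le_left (by positivity)) ?_ ?_ hB0
  · have h0 : (fun i => s ^ i * ((p.choose (i+1)) : C)) 0 = (p : C) := by
      simp [Nat.choose_one_right]
    beta_reduce at h0
    rw [h0, hCp]
    refine max_lt hge ?_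
    exact mul_lt_of_lt_one_right hppos h1
  · intro m hm hmne
    rw [Finset.mem_range] at hm
    rw [norm_mul, norm_pow]
    rcases eq_or_ne m (p-1) with rfl | hmp
    · rw [show p - 1 + 1 = p by omega, Nat.choose_self, Nat.cast_one, norm_one, mul_one]
      exact le_max_left _ _
    · have hdvd : p ∣ p.choose (m+1) := by
        have := hp.dvd_choose_pow (n := 1) (k := m+1) (by omega) (by rw [pow_one]; omega)
        rwa [pow_one] at this
      refine le_max_of_le_right ?_
      calc ‖s‖ ^ m * ‖((p.choose (m+1)) : C)‖ ≤ ‖s‖ ^ m * (p:ℝ)⁻¹ :=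
            mul_le_mul_of_nonneg_left (AV.norm_natCast_dvd_le hCp hCn hdvd) (by positivity)
        _ ≤ ‖s‖ ^ 1 * (p:ℝ)⁻¹ :=
            mul_le_mul_of_nonneg_right
              (pow_le_pow_of_le_one (norm_nonneg s) h1.le (by omega)) (by positivity)
        _ = (p:ℝ)⁻¹ * ‖s‖ := by rw [pow_one, mul_comm]


lemma AV.root_main_bound [IsUltrametricDist C] (hp : p.Prime)
    (hCp : ‖(p : C)‖ = (p:ℝ)⁻¹) (hCn : ∀ n : ℕ, ‖(n : C)‖ ≤ 1)
    {j k : ℕ} {ζ : C} (hζk : ζ ^ p ^ k = 1) (hζj : ζ ^ p ^ j ≠ 1) :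
    0 < ‖ζ - 1‖ ∧ ‖ζ - 1‖ < 1 ∧ (p:ℝ)⁻¹ ≤ ‖ζ - 1‖ ^ ((p - 1) * p ^ j) ∧
      (p:ℝ)⁻¹ ≤ ‖ζ - 1‖ := by
  have hne : ζ ≠ 1 := by rintro rfl; exact hζj (one_pow _)
  set t := ζ - 1 with htdef
  have htne : t ≠ 0 := sub_ne_zero.mpr hne
  have ht0 : 0 < ‖t‖ := norm_pos_iff.mpr htne
  have ht1 : ‖t‖ < 1 := AV.root_norm_lt_one hp hCp hCn hζk hne
  -- find the largest exponent i with ζ ^ p ^ i ≠ 1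
  set P : ℕ → Prop := fun i => ζ ^ p ^ i ≠ 1 with hP
  haveI : DecidablePred P := Classical.decPred P
  have hjk : j < k := by
    by_contra hge
    push_neg at hge
    refine hζj ?_
    have : p ^ j = p ^ k * p ^ (j - k) := by rw [← pow_add]; congr 1; omega
    rw [this, pow_mul, hζk, one_pow]
  have hfgs : P (Nat.findGreatest P k) := Nat.findGreatest_spec hjk.le hζj
  have hfk : Nat.findGreatest P k < k := by
    rcases lt_or_eq_of_le (Nat.findGreatest_le (P := P) k) with h | h
    · exact h
    · exact absurd hζk (h ▸ hfgs)
  obtain ⟨i, hji, hik, hPi, hPi1⟩ : ∃ i, j ≤ i ∧ i < k ∧ P i ∧ ¬ P (i+1) :=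
    ⟨Nat.findGreatest P k, Nat.le_findGreatest hjk.le hζj, hfk, hfgs,
      Nat.findGreatest_is_greatest (Nat.lt_succ_self _) (by omega)⟩
  set w := ζ ^ p ^ i with hw
  have hwne : w ≠ 1 := hPi
  have hwp : w ^ p = 1 := by
    rw [hw, ← pow_mul, ← pow_succ]
    exact not_not.mp hPi1
  obtain ⟨hs1, hsp⟩ := AV.proot_norm_bound hp hCp hCn hwp hwne
  set s := w - 1 with hsdef
  have hsne : s ≠ 0 := sub_ne_zero.mpr hwne
  have hs0 : 0 < ‖s‖ := norm_pos_iff.mpr hsne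
  have hppos : (0:ℝ) < (p:ℝ)⁻¹ := by have := hp.pos; positivity
  -- 1/p ≤ ‖s‖
  have hsinv : (p:ℝ)⁻¹ ≤ ‖s‖ := by
    calc (p:ℝ)⁻¹ ≤ ‖s‖ ^ (p-1) := hsp
      _ ≤ ‖s‖ ^ 1 := pow_le_pow_of_le_one (norm_nonneg s) hs1.le (by have := hp.two_le; omega)
      _ = ‖s‖ := pow_one _
  -- s = (t+1)^(p^i) - 1, bound its norm
  have hseq : s = ∑ m ∈ Finset.range (p ^ i), t * (t ^ m * ((( p ^ i).choose (m+1)) : C)) := by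
    have h' : s = (t + 1) ^ p ^ i - 1 := by
      rw [hsdef, hw, htdef]; ring_nf
    rw [h', AV.pow_sub_one_eq, Finset.mul_sum]
  have hsle : ‖s‖ ≤ max ((p:ℝ)⁻¹ * ‖t‖) (‖t‖ ^ p ^ i) := by
    rw [hseq]
    refine IsUltrametricDist.norm_sum_le_of_forall_le_of_nonneg
      (le_max_of_le_right (by positivity)) ?_
    intro m hm
    rw [Finset.mem_range] at hm
    rw [norm_mul, norm_mul, norm_pow]
    rcases eq_or_ne (m+1) (p ^ i) with hmp | hmp
    · refine le_max_of_le_right ?_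
      rw [show (p^i).choose (m+1) = 1 by rw [hmp, Nat.choose_self], Nat.cast_one, norm_one,
        mul_one, ← pow_succ', hmp]
    · refine le_max_of_le_left ?_
      have hdvd : p ∣ (p ^ i).choose (m+1) := hp.dvd_choose_pow (by omega) hmp
      calc ‖t‖ * (‖t‖ ^ m * ‖(((p ^ i).choose (m+1)) : C)‖)
          ≤ ‖t‖ * (‖t‖ ^ m * (p:ℝ)⁻¹) := by
            refine mul_le_mul_of_nonneg_left ?_ (norm_nonneg t)
            exact mul_le_mul_of_nonneg_left (AV.norm_natCast_dvd_le hCp hCn hdvd) (by positivity)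
        _ ≤ ‖t‖ * (1 * (p:ℝ)⁻¹) := by
            refine mul_le_mul_of_nonneg_left (mul_le_mul_of_nonneg_right ?_ (by positivity))
              (norm_nonneg t)
            exact pow_le_one₀ (norm_nonneg t) ht1.le
        _ = (p:ℝ)⁻¹ * ‖t‖ := by rw [one_mul, mul_comm]
  have hkey : ‖s‖ ≤ ‖t‖ ^ p ^ i := by
    rcases max_cases ((p:ℝ)⁻¹ * ‖t‖) (‖t‖ ^ p ^ i) with ⟨heq, _⟩ | ⟨heq, _⟩
    · exfalso
      have : ‖s‖ < (p:ℝ)⁻¹ := by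
        calc ‖s‖ ≤ (p:ℝ)⁻¹ * ‖t‖ := heq ▸ hsle
          _ < (p:ℝ)⁻¹ * 1 := mul_lt_mul_of_pos_left ht1 hppos
          _ = (p:ℝ)⁻¹ := mul_one _
      exact absurd hsinv (not_le.mpr this)
    · exact heq ▸ hsle
  have hmain : (p:ℝ)⁻¹ ≤ ‖t‖ ^ ((p - 1) * p ^ i) := by
    calc (p:ℝ)⁻¹ ≤ ‖s‖ ^ (p-1) := hsp
      _ ≤ (‖t‖ ^ p ^ i) ^ (p - 1) := pow_le_pow_left₀ hs0.le hkey _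
      _ = ‖t‖ ^ ((p-1) * p ^ i) := by rw [← pow_mul, mul_comm]
  have hmainj : (p:ℝ)⁻¹ ≤ ‖t‖ ^ ((p - 1) * p ^ j) := by
    refine hmain.trans (pow_le_pow_of_le_one ht0.le ht1.le ?_)
    exact Nat.mul_le_mul_left _ (Nat.pow_le_pow_right hp.pos hji)
  refine ⟨ht0, ht1, hmainj, ?_⟩
  calc (p:ℝ)⁻¹ ≤ ‖t‖ ^ ((p - 1) * p ^ j) := hmainj
    _ ≤ ‖t‖ ^ 1 := pow_le_pow_of_le_one ht0.le ht1.le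
        (Nat.mul_pos (by have := hp.two_le; omega) (pow_pos hp.pos j))
    _ = ‖t‖ := pow_one _


lemma AV.norm_values_finite (p : ℕ) [Fact p.Prime]
    (L : Type*) [NormedField L] [Algebra ℚ_[p] L] [FiniteDimensional ℚ_[p] L]
    (hL : ∀ x : ℚ_[p], ‖algebraMap ℚ_[p] L x‖ = ‖x‖)
    (hult : ∀ x y : L, ‖x + y‖ ≤ max ‖x‖ ‖y‖) {b : ℝ} (hb : 0 < b) :
    {c : ℝ | b ≤ c ∧ ∃ x : L, ‖x‖ ≤ 1 ∧ ‖x‖ = c}.Finite := by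
  letI : NormedSpace ℚ_[p] L :=
    ⟨fun c x => le_of_eq (by rw [Algebra.smul_def, norm_mul, hL])⟩
  haveI : ProperSpace L := FiniteDimensional.proper ℚ_[p] L
  by_contra hinf
  rw [← Set.Infinite] at hinf
  set S := {c : ℝ | b ≤ c ∧ ∃ x : L, ‖x‖ ≤ 1 ∧ ‖x‖ = c} with hS
  let e : ℕ ↪ S := hinf.natEmbedding
  have hprop : ∀ n : ℕ, ∃ x : L, ‖x‖ ≤ 1 ∧ ‖x‖ = (e n : ℝ) := fun n => (e n).2.2
  choose x hx1 hx2 using hprop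
  have hxb : ∀ n, b ≤ ‖x n‖ := fun n => (hx2 n) ▸ (e n).2.1
  have hdist : ∀ m n : ℕ, m ≠ n → ‖x m‖ ≠ ‖x n‖ := by
    intro m n hmn h
    apply hmn
    have : (e m : ℝ) = (e n : ℝ) := by rw [← hx2 m, ← hx2 n, h]
    exact e.injective (Subtype.coe_injective this)
  have hsep : ∀ m n : ℕ, m ≠ n → b ≤ dist (x m) (x n) := by
    have key : ∀ u v : L, ‖v‖ < ‖u‖ → b ≤ ‖u‖ → b ≤ ‖u - v‖ := by
      intro u v hlt hbu
      have h1 : ‖u‖ ≤ max ‖u - v‖ ‖v‖ := by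
        calc ‖u‖ = ‖(u - v) + v‖ := by ring_nf
          _ ≤ max ‖u - v‖ ‖v‖ := hult _ _
      rcases max_cases ‖u - v‖ ‖v‖ with ⟨heq, _⟩ | ⟨heq, _⟩
      · exact hbu.trans (heq ▸ h1)
      · rw [heq] at h1; exact absurd (h1.trans_lt hlt) (lt_irrefl _)
    intro m n hmn
    rw [dist_eq_norm]
    rcases (hdist m n hmn).lt_or_gt with h | h
    · rw [norm_sub_rev]; exact key _ _ h (hxb n)
    · exact key _ _ h (hxb m)
  have hmem : ∀ n, x n ∈ Metric.closedBall (0:L) 1 := fun n => by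
    rw [Metric.mem_closedBall, dist_zero_right]; exact hx1 n
  obtain ⟨l, -, φ, hφ, hconv⟩ :=
    (isCompact_closedBall (0:L) 1).tendsto_subseq hmem
  rw [Metric.tendsto_atTop] at hconv
  obtain ⟨N, hN⟩ := hconv (b/2) (by positivity)
  have h1 := hN N le_rfl
  have h2 := hN (N+1) (by omega)
  have h3 : dist (x (φ N)) (x (φ (N+1))) < b :=
    calc dist (x (φ N)) (x (φ (N+1))) ≤ dist (x (φ N)) l + dist (x (φ (N+1))) l :=
          dist_triangle_right _ _ _
      _ < b/2 + b/2 := add_lt_add h1 h2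
      _ = b := by ring
  have hne : φ N ≠ φ (N+1) := fun h => absurd (hφ.injective h) (by omega)
  exact absurd h3 (not_lt.mpr (hsep _ _ hne))


lemma AV.exists_pair [IsUltrametricDist C] [CompleteSpace C] (a : ℕ → C) (ha : ∀ m, ‖a m‖ ≤ 1)
    (t : C) (ht0 : 0 < ‖t‖) (ht1 : ‖t‖ < 1)
    (hzero : ∑' m, a m * t ^ m = 0) (m₀ : ℕ) (hm₀ : a m₀ ≠ 0) :
    ∃ i j, i < j ∧ 0 < ‖a i‖ ∧ 0 < ‖a j‖ ∧
      ‖a i‖ * ‖t‖ ^ i = ‖a j‖ * ‖t‖ ^ j ∧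
      ∀ m, ‖a m‖ * ‖t‖ ^ m ≤ ‖a i‖ * ‖t‖ ^ i := by
  set g : ℕ → ℝ := fun m => ‖a m‖ * ‖t‖ ^ m with hgdef
  have hgnorm : ∀ m, ‖a m * t ^ m‖ = g m := fun m => by
    rw [hgdef, norm_mul, norm_pow]
  have hg0 : ∀ m, 0 ≤ g m := fun m => mul_nonneg (norm_nonneg _) (pow_nonneg ht0.le _)
  have hgm₀ : 0 < g m₀ := mul_pos (norm_pos_iff.mpr hm₀) (pow_pos ht0 _)
  have hgle : ∀ m, g m ≤ ‖t‖ ^ m := fun m => by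
    calc g m ≤ 1 * ‖t‖ ^ m :=
        mul_le_mul_of_nonneg_right (ha m) (pow_nonneg ht0.le _)
      _ = ‖t‖ ^ m := one_mul _
  have hsummable : Summable (fun m => a m * t ^ m) := by
    refine Summable.of_norm_bounded (summable_geometric_of_lt_one ht0.le ht1) ?_
    intro m; rw [hgnorm]; exact hgle m
  have hten : Tendsto g atTop (𝓝 0) :=
    squeeze_zero hg0 hgle (tendsto_pow_atTop_nhds_zero_of_lt_one ht0.le ht1)
  -- global argmax exists
  have hmax : ∃ M, ∀ m, g m ≤ g M := by
    obtain ⟨N, hN⟩ := eventually_atTop.mp (hten.eventually_lt_const hgm₀)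
    obtain ⟨M, hM1, hM2⟩ := (Finset.range (N+1)).exists_max_image g
      ⟨m₀, Finset.mem_range.mpr (by
        by_contra h
        exact absurd (hN m₀ (by omega)) (lt_irrefl _))⟩
    refine ⟨M, fun m => ?_⟩
    rcases le_or_gt m N with h | h
    · exact hM2 m (Finset.mem_range.mpr (by omega))
    · exact (hN m h.le).le.trans (hM2 m₀ (Finset.mem_range.mpr (by
        by_contra hc
        exact absurd (hN m₀ (by omega)) (lt_irrefl _))))
  haveI : DecidablePred (fun M => ∀ m, g m ≤ g M) := Classical.decPred _
  set i := Nat.find hmax with hidef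
  have hi : ∀ m, g m ≤ g i := Nat.find_spec hmax
  have higm : 0 < g i := lt_of_lt_of_le hgm₀ (hi m₀)
  have hai : 0 < ‖a i‖ := by
    by_contra h
    push_neg at h
    have : ‖a i‖ = 0 := le_antisymm h (norm_nonneg _)
    rw [hgdef] at higm; simp only [this, zero_mul] at higm; exact lt_irrefl _ higm
  -- second attaining index above i
  have hj : ∃ j, i < j ∧ g j = g i := by
    by_contra hno
    push_neg at hno
    have hlt : ∀ m, m ≠ i → g m < g i := by
      intro m hm
      rcases lt_or_gt_of_ne hm with h | h
      · rcases lt_or_eq_of_le (hi m) with h' | h'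
        · exact h'
        · exfalso
          exact Nat.find_min hmax h (fun n => h' ▸ hi n)
      · exact lt_of_le_of_ne (hi m) (hno m h)
    -- uniform bound
    obtain ⟨N, hN⟩ := eventually_atTop.mp (hten.eventually_le_const (by positivity : (0:ℝ) < g i / 2))
    set s : Finset ℝ := insert (g i / 2) (((Finset.range N).erase i).image g) with hsdef
    have hsne : s.Nonempty := ⟨g i / 2, Finset.mem_insert_self _ _⟩
    set c := s.max' hsne with hcdef
    have hc0 : 0 ≤ c := le_trans (by positivity) (Finset.le_max' s _ (Finset.mem_insert_self _ _))
    have hclt : c < g i := by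
      rw [hcdef]
      refine (Finset.max'_lt_iff s hsne).mpr ?_
      intro y hy
      rcases Finset.mem_insert.mp hy with rfl | hy'
      · linarith
      · obtain ⟨m, hm1, rfl⟩ := Finset.mem_image.mp hy'
        exact hlt m (Finset.ne_of_mem_erase hm1)
    have hbound : ∀ m, m ≠ i → ‖a m * t ^ m‖ ≤ c := by
      intro m hm
      rw [hgnorm]
      rcases lt_or_ge m N with h | h
      · exact Finset.le_max' s _ (Finset.mem_insert_of_mem (Finset.mem_image.mpr
          ⟨m, Finset.mem_erase.mpr ⟨hm, Finset.mem_range.mpr h⟩, rfl⟩))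
      · exact (hN m h).trans (Finset.le_max' s _ (Finset.mem_insert_self _ _))
    refine AV.tsum_dom hsummable hc0 ?_ hbound hzero
    rw [hgnorm]; exact hclt
  obtain ⟨j, hij, hgj⟩ := hj
  have haj : 0 < ‖a j‖ := by
    by_contra h
    push_neg at h
    have h0 : ‖a j‖ = 0 := le_antisymm h (norm_nonneg _)
    rw [← hgj] at higm
    rw [hgdef] at higm; simp only [h0, zero_mul] at higm; exact lt_irrefl _ higm
  exact ⟨i, j, hij, hai, haj, hgj.symm, hi⟩

end AVhelpers

/-- Amice–Vélu. Let `L` be a finite extension of `ℚ_p` and let `C` be a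
complete normed field isometrically containing `L` (e.g. `ℂ_p`).  If `f ∈ O_L⟦X⟧` (a power
series with integral coefficients) vanishes at `ζ - 1` for infinitely many roots of unity
`ζ ∈ C` of `p`-power order, then `f = 0`. -/
theorem power_series_vanishing_on_padic_roots_of_unity
    (p : ℕ) [hp : Fact p.Prime]
    (L : Type*) [NormedField L] [Algebra ℚ_[p] L] [FiniteDimensional ℚ_[p] L]
    (hL : ∀ x : ℚ_[p], ‖algebraMap ℚ_[p] L x‖ = ‖x‖)
    (C : Type*) [NormedField C] [CompleteSpace C]
    (σ : L →+* C) (hσ : ∀ x : L, ‖σ x‖ = ‖x‖)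
    (f : PowerSeries L) (hf : ∀ k : ℕ, ‖PowerSeries.coeff k f‖ ≤ 1)
    (hzeros : {ζ : C | (∃ k : ℕ, ζ ^ p ^ k = 1) ∧
        ∑' m : ℕ, σ (PowerSeries.coeff m f) * (ζ - 1) ^ m = 0}.Infinite) :
    f = 0 := by
  by_contra hf0
  obtain ⟨m₀, hm₀⟩ : ∃ m, PowerSeries.coeff m f ≠ 0 := by
    by_contra h
    push_neg at h
    exact hf0 (PowerSeries.ext fun n => by rw [h n, map_zero])
  set a : ℕ → C := fun m => σ (PowerSeries.coeff m f) with hadef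
  have hanorm : ∀ m, ‖a m‖ = ‖PowerSeries.coeff m f‖ := fun m => hσ _
  have ha1 : ∀ m, ‖a m‖ ≤ 1 := fun m => by rw [hanorm]; exact hf m
  have ham₀ : 0 < ‖a m₀‖ := by rw [hanorm]; exact norm_pos_iff.mpr hm₀
  have ham₀' : a m₀ ≠ 0 := norm_pos_iff.mp ham₀
  have hnat : ∀ n : ℕ, ‖(n : C)‖ = ‖(n : ℚ_[p])‖ := fun n => by
    rw [← map_natCast σ, hσ, ← map_natCast (algebraMap ℚ_[p] L), hL]
  have hCn : ∀ n : ℕ, ‖(n : C)‖ ≤ 1 := fun n => by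
    rw [hnat]
    have := Padic.norm_int_le_one (p := p) (n : ℤ)
    simpa using this
  haveI : IsUltrametricDist C :=
    IsUltrametricDist.isUltrametricDist_of_forall_norm_natCast_le_one hCn
  have hCp : ‖(p : C)‖ = (p : ℝ)⁻¹ := by rw [hnat]; exact Padic.norm_p
  have hppos : (0:ℝ) < (p : ℝ)⁻¹ := by
    have := hp.out.pos
    positivity
  have hultL : ∀ x y : L, ‖x + y‖ ≤ max ‖x‖ ‖y‖ := fun x y => by
    rw [← hσ, ← hσ x, ← hσ y, map_add]
    exact IsUltrametricDist.norm_add_le_max _ _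
  classical
  have hfin : ∀ j : ℕ, {ζ : C | ζ ^ p ^ j = 1}.Finite := by
    intro j
    refine Set.Finite.subset (Polynomial.nthRoots (p ^ j) (1 : C)).toFinset.finite_toSet ?_
    intro x hx
    simp only [Finset.mem_coe, Multiset.mem_toFinset,
      Polynomial.mem_nthRoots (pow_pos hp.out.pos j)]
    exact hx
  -- escape lemma: there are zeros of arbitrarily large norm < 1
  have hesc : ∀ r : ℝ, 0 ≤ r → r < 1 →
      ∃ t : C, (∑' m, a m * t ^ m = 0) ∧ r < ‖t‖ ∧ ‖t‖ < 1 ∧ (p : ℝ)⁻¹ ≤ ‖t‖ := by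
    intro r hr0 hr1
    obtain ⟨N, hN⟩ := exists_pow_lt_of_lt_one hppos hr1
    obtain ⟨ζ, hζ⟩ := (hzeros.diff (hfin N)).nonempty
    obtain ⟨⟨⟨k, hk⟩, hzeroζ⟩, hζN⟩ := hζ
    obtain ⟨h0, h1, hbnd, hinv⟩ := AV.root_main_bound hp.out hCp hCn hk hζN
    refine ⟨ζ - 1, hzeroζ, ?_, h1, hinv⟩
    by_contra hle
    push_neg at hle
    have hNle : N ≤ (p - 1) * p ^ N := by
      calc N ≤ p ^ N := (Nat.lt_pow_self (n := N) hp.out.one_lt).le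
        _ ≤ (p - 1) * p ^ N := Nat.le_mul_of_pos_left _ (by have := hp.out.two_le; omega)
    have : (p : ℝ)⁻¹ < (p : ℝ)⁻¹ := by
      calc (p : ℝ)⁻¹ ≤ ‖ζ - 1‖ ^ ((p - 1) * p ^ N) := hbnd
        _ ≤ r ^ ((p - 1) * p ^ N) := pow_le_pow_left₀ h0.le hle _
        _ ≤ r ^ N := pow_le_pow_of_le_one hr0 hr1.le hNle
        _ < (p : ℝ)⁻¹ := hN
    exact absurd this (lt_irrefl _)
  set b : ℝ := ‖a m₀‖ * (p : ℝ)⁻¹ ^ m₀ with hbdef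
  have hb : 0 < b := mul_pos ham₀ (pow_pos hppos _)
  set T : Set ℝ := {c | ∃ t : C, (∑' m, a m * t ^ m = 0) ∧ (p : ℝ)⁻¹ ≤ ‖t‖ ∧ ‖t‖ < 1 ∧
    ∃ i j : ℕ, i < j ∧ 0 < ‖a i‖ ∧ 0 < ‖a j‖ ∧ ‖a i‖ * ‖t‖ ^ i = ‖a j‖ * ‖t‖ ^ j ∧
    (∀ m, ‖a m‖ * ‖t‖ ^ m ≤ ‖a i‖ * ‖t‖ ^ i) ∧ c = ‖a i‖} with hTdef
  have hTne : T.Nonempty := by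
    obtain ⟨t, hz, hgt, h1, hinv⟩ := hesc 0 le_rfl one_pos
    obtain ⟨i, j, hij, hi0, hj0, heq, hmax⟩ :=
      AV.exists_pair a ha1 t (lt_of_lt_of_le hppos hinv) h1 hz m₀ ham₀'
    exact ⟨‖a i‖, t, hz, hinv, h1, i, j, hij, hi0, hj0, heq, hmax, rfl⟩
  have hTsub : T ⊆ {c : ℝ | b ≤ c ∧ ∃ x : L, ‖x‖ ≤ 1 ∧ ‖x‖ = c} := by
    rintro c ⟨t, hz, hinv, h1, i, j, hij, hi0, hj0, heq, hmax, rfl⟩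
    have ht0 : 0 < ‖t‖ := lt_of_lt_of_le hppos hinv
    constructor
    · have h2 : ‖a m₀‖ * (p : ℝ)⁻¹ ^ m₀ ≤ ‖a m₀‖ * ‖t‖ ^ m₀ :=
        mul_le_mul_of_nonneg_left (pow_le_pow_left₀ hppos.le hinv _) (norm_nonneg _)
      have h3 := hmax m₀
      have h4 : ‖a i‖ * ‖t‖ ^ i ≤ ‖a i‖ * 1 :=
        mul_le_mul_of_nonneg_left (pow_le_one₀ ht0.le h1.le) (norm_nonneg _)
      rw [mul_one] at h4
      exact le_trans h2 (le_trans h3 h4)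
    · exact ⟨PowerSeries.coeff i f, hf i, (hanorm i).symm⟩
  have hTfin : T.Finite := (AV.norm_values_finite p L hL hultL hb).subset hTsub
  have hstep : ∀ c ∈ T, ∃ c' ∈ T, c < c' := by
    rintro c ⟨t, hz, hinv, h1, i, j, hij, hi0, hj0, heq, hmax, rfl⟩
    have ht0 : 0 < ‖t‖ := lt_of_lt_of_le hppos hinv
    obtain ⟨t', hz', hgt', h1', hinv'⟩ := hesc ‖t‖ ht0.le h1
    have ht0' : 0 < ‖t'‖ := ht0.trans hgt'
    obtain ⟨i', j', hij', hi0', hj0', heq', hmax'⟩ :=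
      AV.exists_pair a ha1 t' ht0' h1' hz' m₀ ham₀'
    refine ⟨‖a i'‖, ⟨t', hz', hinv', h1', i', j', hij', hi0', hj0', heq', hmax', rfl⟩, ?_⟩
    have h5 : ‖a i‖ < ‖a j‖ := by
      have h7 : ‖a i‖ = ‖a j‖ * ‖t‖ ^ (j - i) := by
        have h6 := heq
        rw [show (‖t‖:ℝ) ^ j = ‖t‖ ^ (j - i) * ‖t‖ ^ i by
          rw [← pow_add]; congr 1; omega, ← mul_assoc] at h6
        exact mul_right_cancel₀ (ne_of_gt (pow_pos ht0 i)) h6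
      rw [h7]
      calc ‖a j‖ * ‖t‖ ^ (j - i) < ‖a j‖ * 1 :=
            mul_lt_mul_of_pos_left (pow_lt_one₀ ht0.le h1 (by omega)) hj0
        _ = ‖a j‖ := mul_one _
    have hji' : j ≤ i' := by
      by_contra hc
      push_neg at hc
      have h8 : ‖a i'‖ * ‖t‖ ^ i' ≤ ‖a j‖ * ‖t‖ ^ j := (hmax i').trans_eq heq
      have h9 : ‖a i'‖ ≤ ‖a j‖ * ‖t‖ ^ (j - i') := by
        have h8' : ‖a i'‖ * ‖t‖ ^ i' ≤ ‖a j‖ * ‖t‖ ^ (j - i') * ‖t‖ ^ i' := by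
          rw [mul_assoc, ← pow_add, show j - i' + i' = j by omega]
          exact h8
        exact le_of_mul_le_mul_right h8' (pow_pos ht0 i')
      have h10 : ‖a i'‖ * ‖t'‖ ^ i' < ‖a j‖ * ‖t'‖ ^ j := by
        calc ‖a i'‖ * ‖t'‖ ^ i' ≤ (‖a j‖ * ‖t‖ ^ (j - i')) * ‖t'‖ ^ i' :=
              mul_le_mul_of_nonneg_right h9 (by positivity)
          _ < (‖a j‖ * ‖t'‖ ^ (j - i')) * ‖t'‖ ^ i' := by
              have hpl : ‖t‖ ^ (j - i') < ‖t'‖ ^ (j - i') :=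
                pow_lt_pow_left₀ hgt' ht0.le (by omega)
              exact mul_lt_mul_of_pos_right (mul_lt_mul_of_pos_left hpl hj0) (pow_pos ht0' i')
          _ = ‖a j‖ * ‖t'‖ ^ j := by
              rw [mul_assoc, ← pow_add, show j - i' + i' = j by omega]
      exact absurd (hmax' j) (not_le.mpr h10)
    have h11 : ‖a j‖ ≤ ‖a i'‖ := by
      have h12 : ‖a j‖ * ‖t'‖ ^ j ≤ ‖a i'‖ * ‖t'‖ ^ i' := hmax' j
      have h13 : ‖a i'‖ * ‖t'‖ ^ i' ≤ ‖a i'‖ * ‖t'‖ ^ j :=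
        mul_le_mul_of_nonneg_left (pow_le_pow_of_le_one ht0'.le h1'.le hji') (norm_nonneg _)
      exact le_of_mul_le_mul_right (h12.trans h13) (pow_pos ht0' j)
    exact h5.trans_le h11
  obtain ⟨cmax, hcmaxT, hcmax⟩ := Set.Finite.exists_maximalFor id T hTfin hTne
  obtain ⟨c', hc'T, hlt⟩ := hstep cmax hcmaxT
  exact absurd (hcmax hc'T hlt.le) (not_le.mpr hlt)
end

section
/- Let p be a prime, μ the Haar measure on ℚ_p with μ(ℤ_p) = 1, ψ(t) = e^{2πi·{t}_p} the standard additive character, and β: ℚ_p^× → ℂ^× an unramified multiplicative character (trivial on ℤ_p^×) with |β(p)| < 1. Then lim_{N→∞} ∫_{{t : v(t) ≥ −N}} β(t)ψ(t) dμ(t) exists, the integrals stabilize for N ≥ 1, and the value equals (1 − β(p)^{−1}) / (1 − β(p)·p^{−1}). -/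
open MeasureTheory

/-- For every `t ∈ ℚ_p` there is an `n` with `p^n · t ∈ ℤ_p`. -/
theorem exists_pow_mul_norm_le (p : ℕ) [hp : Fact p.Prime] (t : ℚ_[p]) :
    ∃ n : ℕ, ‖(p : ℚ_[p]) ^ n * t‖ ≤ 1 := by
  obtain ⟨n, hn⟩ : ∃ n : ℕ, ‖t‖ < (p : ℝ) ^ n :=
    pow_unbounded_of_one_lt _ (by exact_mod_cast hp.out.one_lt)
  refine ⟨n, ?_⟩
  have hppos : (0 : ℝ) < (p : ℝ) ^ n := by
    have : (0 : ℝ) < (p : ℝ) := by exact_mod_cast hp.out.pos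
    positivity
  rw [norm_mul, norm_pow, Padic.norm_p, inv_pow]
  calc ((p : ℝ) ^ n)⁻¹ * ‖t‖ ≤ ((p : ℝ) ^ n)⁻¹ * (p : ℝ) ^ n :=
        mul_le_mul_of_nonneg_left hn.le (by positivity)
    _ = 1 := inv_mul_cancel₀ (ne_of_gt hppos)

/-- The `p`-adic fractional part `{t}_p ∈ ℤ[1/p] ∩ [0, 1)` of `t ∈ ℚ_p`, i.e. the unique
rational of this form with `t - {t}_p ∈ ℤ_p`; it is computed from the canonical mod-`p^n`
approximation `PadicInt.appr` of `p^n · t ∈ ℤ_p`. -/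
noncomputable def padicFract (p : ℕ) [hp : Fact p.Prime] (t : ℚ_[p]) : ℚ :=
  ((PadicInt.appr
      (⟨(p : ℚ_[p]) ^ (exists_pow_mul_norm_le p t).choose * t,
        (exists_pow_mul_norm_le p t).choose_spec⟩ : ℤ_[p])
      (exists_pow_mul_norm_le p t).choose : ℚ)) /
    (p : ℚ) ^ (exists_pow_mul_norm_le p t).choose

/-- The standard additive character `ψ(t) = e^{2πi·{t}_p}` of `ℚ_p`. -/
noncomputable def padicChar (p : ℕ) [Fact p.Prime] (t : ℚ_[p]) : ℂ :=
  Complex.exp (2 * Real.pi * Complex.I * (padicFract p t : ℂ))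

open Filter
open scoped Classical

open scoped ENNReal

section FractLemmas

variable (p : ℕ) [hp : Fact p.Prime]

theorem padicFract_form (t : ℚ_[p]) : ∃ (a n : ℕ), padicFract p t = a / p ^ n :=
  ⟨_, _, rfl⟩

theorem padicFract_spec (t : ℚ_[p]) : ‖t - (padicFract p t : ℚ_[p])‖ ≤ 1 := by
  set n := (exists_pow_mul_norm_le p t).choose with hn
  set x : ℤ_[p] := ⟨(p : ℚ_[p]) ^ n * t, (exists_pow_mul_norm_le p t).choose_spec⟩ with hx
  have hsp : x - (x.appr n : ℤ_[p]) ∈ Ideal.span {(p : ℤ_[p]) ^ n} := PadicInt.appr_spec n x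
  rw [← PadicInt.norm_le_pow_iff_mem_span_pow] at hsp
  have hxval : (x : ℚ_[p]) = (p : ℚ_[p]) ^ n * t := rfl
  have key : t - (padicFract p t : ℚ_[p]) = ((p : ℚ_[p]) ^ n)⁻¹ * ((x : ℚ_[p]) - (x.appr n : ℚ_[p])) := by
    have hpne : ((p : ℚ_[p]) ^ n) ≠ 0 := by
      exact pow_ne_zero _ (Nat.cast_ne_zero.mpr hp.out.ne_zero)
    have hF : padicFract p t = ((x.appr n : ℚ)) / (p:ℚ) ^ n := rfl
    rw [hF, hxval]
    push_cast
    field_simp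
  rw [key, norm_mul]
  have h1 : ‖((p : ℚ_[p]) ^ n)⁻¹‖ = (p:ℝ) ^ n := by
    rw [norm_inv, norm_pow, Padic.norm_p]
    simp
  have h2 : ‖(x : ℚ_[p]) - ((x.appr n : ℤ_[p]) : ℚ_[p])‖ ≤ (p:ℝ) ^ (-(n:ℤ)) := by
    simpa [PadicInt.norm_def] using hsp
  calc ‖((p : ℚ_[p]) ^ n)⁻¹‖ * ‖(x : ℚ_[p]) - (x.appr n : ℚ_[p])‖
      ≤ (p:ℝ) ^ n * (p:ℝ) ^ (-(n:ℤ)) := by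
        rw [h1]; exact mul_le_mul_of_nonneg_left h2 (by positivity)
    _ = 1 := by
        rw [← zpow_natCast (p:ℝ) n, ← zpow_add₀ (by exact_mod_cast hp.out.ne_zero : (p:ℝ) ≠ 0)]
        simp

end FractLemmas

section RatInt

variable (p : ℕ) [hp : Fact p.Prime]


/-- A rational of the form `a/p^n` that is a `p`-adic integer is an integer. -/
theorem rat_int_of_form (q : ℚ) (h : ∃ (a : ℤ) (n : ℕ), q = a / p ^ n)
    (hq : ‖(q : ℚ_[p])‖ ≤ 1) : ∃ m : ℤ, q = m := by
  obtain ⟨a, n, rfl⟩ := h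
  have hpq : ((p:ℚ)) ^ n ≠ 0 := pow_ne_zero _ (by exact_mod_cast hp.out.ne_zero)
  have key : (a : ℚ_[p]) = ((a / p ^ n : ℚ) : ℚ_[p]) * (p:ℚ_[p]) ^ n := by
    push_cast; field_simp; rw [mul_div_cancel_right₀ _ (pow_ne_zero _ (Nat.cast_ne_zero.mpr hp.out.ne_zero))]
  have h2 : ‖((a : ℚ_[p]))‖ ≤ (p:ℝ) ^ (-(n:ℤ)) := by
    rw [key, norm_mul, norm_pow, Padic.norm_p]
    calc ‖((a / p ^ n : ℚ) : ℚ_[p])‖ * ((p:ℝ)⁻¹) ^ n ≤ 1 * ((p:ℝ)⁻¹) ^ n := by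
          apply mul_le_mul_of_nonneg_right hq (by positivity)
      _ = (p:ℝ) ^ (-(n:ℤ)) := by
          rw [one_mul, inv_pow, ← zpow_natCast (p:ℝ) n, ← zpow_neg]
  rw [Padic.norm_int_le_pow_iff_dvd] at h2
  obtain ⟨c, hc⟩ := h2
  exact ⟨c, by rw [hc]; push_cast; field_simp⟩

end RatInt

section CharLemmas

variable (p : ℕ) [hp : Fact p.Prime]


theorem exp_rat_int (q : ℚ) (m : ℤ) :
    Complex.exp (2 * Real.pi * Complex.I * ((q + m : ℚ) : ℂ)) =
      Complex.exp (2 * Real.pi * Complex.I * (q : ℂ)) := by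
  push_cast
  rw [mul_add, Complex.exp_add]
  have : (2 * (Real.pi:ℂ) * Complex.I * (m:ℂ)) = (m:ℂ) * (2 * Real.pi * Complex.I) := by ring
  rw [this, Complex.exp_int_mul_two_pi_mul_I, mul_one]

theorem padicChar_add (t s : ℚ_[p]) : padicChar p (t + s) = padicChar p t * padicChar p s := by
  obtain ⟨m, hm⟩ : ∃ m : ℤ, padicFract p (t + s) - padicFract p t - padicFract p s = m := by
    apply rat_int_of_form p
    · obtain ⟨a₁, n₁, h₁⟩ := padicFract_form p (t + s)
      obtain ⟨a₂, n₂, h₂⟩ := padicFract_form p t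
      obtain ⟨a₃, n₃, h₃⟩ := padicFract_form p s
      refine ⟨(a₁ : ℤ) * p ^ (n₂ + n₃) - (a₂ : ℤ) * p ^ (n₁ + n₃) - (a₃ : ℤ) * p ^ (n₁ + n₂),
        n₁ + n₂ + n₃, ?_⟩
      have hpq : ((p:ℚ)) ≠ 0 := by exact_mod_cast hp.out.ne_zero
      rw [h₁, h₂, h₃]
      field_simp
      push_cast
      ring
    · have key : ((( padicFract p (t + s) - padicFract p t - padicFract p s : ℚ)) : ℚ_[p]) =
          -((t + s) - (padicFract p (t+s) : ℚ_[p])) + ((t - (padicFract p t : ℚ_[p])) + (s - (padicFract p s : ℚ_[p]))) := by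
        push_cast; ring
      rw [key]
      refine le_trans (Padic.nonarchimedean _ _) (max_le ?_ ?_)
      · rw [norm_neg]; exact padicFract_spec p _
      · exact le_trans (Padic.nonarchimedean _ _)
          (max_le (padicFract_spec p _) (padicFract_spec p _))
  have h2 : padicFract p (t + s) = (padicFract p t + padicFract p s) + m := by linarith [hm]
  simp only [padicChar]
  rw [h2, exp_rat_int]
  push_cast
  rw [mul_add, Complex.exp_add]

theorem padicChar_eq_one_of (t : ℚ_[p]) (h : ‖t‖ ≤ 1) : padicChar p t = 1 := by
  obtain ⟨m, hm⟩ : ∃ m : ℤ, padicFract p t = m := by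
    apply rat_int_of_form p
    · obtain ⟨a, n, h₁⟩ := padicFract_form p t
      exact ⟨a, n, by rw [h₁]; push_cast; ring⟩
    · have key : ((padicFract p t : ℚ) : ℚ_[p]) = t + -(t - (padicFract p t : ℚ_[p])) := by push_cast; ring
      rw [key]
      refine le_trans (Padic.nonarchimedean _ _) (max_le h ?_)
      rw [norm_neg]; exact padicFract_spec p _
  have : padicFract p t = 0 + m := by rw [hm]; ring
  rw [padicChar, this, exp_rat_int]
  simp

theorem padicChar_ne_one (t : ℚ_[p]) (h : ¬ (‖t‖ ≤ 1)) : padicChar p t ≠ 1 := by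
  intro hone
  apply h
  rw [padicChar, Complex.exp_eq_one_iff] at hone
  obtain ⟨n, hn⟩ := hone
  have hiπ : (2 * (Real.pi:ℂ) * Complex.I) ≠ 0 := by
    simp [Real.pi_ne_zero, Complex.I_ne_zero]
  have hq : ((padicFract p t : ℚ) : ℂ) = (n : ℂ) := by
    have : 2 * (Real.pi:ℂ) * Complex.I * ((padicFract p t : ℚ) : ℂ) =
        2 * (Real.pi:ℂ) * Complex.I * (n:ℂ) := by rw [hn]; ring
    exact mul_left_cancel₀ hiπ this
  have hq' : (padicFract p t : ℚ) = (n : ℚ) := by exact_mod_cast hq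
  have : t = (t - (padicFract p t : ℚ_[p])) + ((n:ℤ) : ℚ_[p]) := by
    rw [hq']; push_cast; ring
  rw [this]
  exact le_trans (Padic.nonarchimedean _ _)
    (max_le (padicFract_spec p _) (Padic.norm_int_le_one _))

theorem padicChar_norm (t : ℚ_[p]) : ‖padicChar p t‖ = 1 := by
  rw [padicChar, Complex.norm_exp]
  have : (2 * (Real.pi:ℂ) * Complex.I * ((padicFract p t : ℚ) : ℂ)).re = 0 := by
    simp [Complex.mul_re, Complex.mul_im]
  rw [this, Real.exp_zero]

theorem padicChar_continuous : Continuous (padicChar p) := by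
  rw [continuous_iff_continuousAt]
  intro t
  have hev : ∀ s ∈ Metric.ball t 1, padicChar p s = padicChar p t := by
    intro s hs
    have h1 : ‖s - t‖ ≤ 1 := by
      rw [Metric.mem_ball, dist_eq_norm] at hs
      exact hs.le
    have : padicChar p s = padicChar p (t + (s - t)) := by ring_nf
    rw [this, padicChar_add, padicChar_eq_one_of p _ h1, mul_one]
  have : padicChar p =ᶠ[nhds t] (fun _ => padicChar p t) := by
    filter_upwards [Metric.ball_mem_nhds t one_pos] with s hs using hev s hs
  exact this.continuousAt

end CharLemmas

section Beta

variable (p : ℕ) [hp : Fact p.Prime]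


theorem beta_val (β : ℚ_[p]ˣ →* ℂˣ)
    (hβ : ∀ u : ℚ_[p]ˣ, ‖(u : ℚ_[p])‖ = 1 → β u = 1)
    (up : ℚ_[p]ˣ) (hup : (up : ℚ_[p]) = (p : ℚ_[p]))
    (n : ℤ) (t : ℚ_[p]) (h : t ≠ 0) (ht : ‖t‖ = (p:ℝ) ^ n) :
    ((β (Units.mk0 t h) : ℂˣ) : ℂ) = ((β up : ℂˣ) : ℂ) ^ (-n) := by
  set u : ℚ_[p]ˣ := Units.mk0 t h * up ^ n with hu
  have hpne : ((p:ℝ)) ≠ 0 := by exact_mod_cast hp.out.ne_zero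
  have hunorm : ‖(u : ℚ_[p])‖ = 1 := by
    rw [hu, Units.val_mul, norm_mul, Units.val_zpow_eq_zpow_val, hup, norm_zpow,
      Padic.norm_p, Units.val_mk0, ht, inv_zpow, ← zpow_neg, ← zpow_add₀ hpne]
    simp
  have h1 : β (Units.mk0 t h) = β u * (β up) ^ (-n) := by
    rw [hu, map_mul, map_zpow, mul_assoc, ← zpow_add]
    simp
  rw [h1, hβ u hunorm, one_mul]
  rw [← Units.val_zpow_eq_zpow_val]

end Beta


section Balls

variable (p : ℕ) [hp : Fact p.Prime]

/-- The closed ball of radius `p^n` in `ℚ_p`. -/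
def pBall (n : ℤ) : Set ℚ_[p] := {t : ℚ_[p] | ‖t‖ ≤ (p : ℝ) ^ n}

theorem one_lt_p : (1 : ℝ) < (p : ℝ) := by exact_mod_cast hp.out.one_lt
theorem p_pos : (0 : ℝ) < (p : ℝ) := by exact_mod_cast hp.out.pos

theorem pBall_mono {m n : ℤ} (h : m ≤ n) : pBall p m ⊆ pBall p n := by
  intro t ht
  exact le_trans ht (zpow_le_zpow_right₀ (one_lt_p p).le h)

theorem measurableSet_pBall [MeasurableSpace ℚ_[p]] [BorelSpace ℚ_[p]] (n : ℤ) :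
    MeasurableSet (pBall p n) :=
  (isClosed_le continuous_norm continuous_const).measurableSet

theorem norm_coe_nat_le_one (j : ℕ) : ‖((j : ℚ_[p]))‖ ≤ 1 := by
  have := Padic.norm_int_le_one (p := p) (j : ℤ)
  simpa using this

theorem pBall_cover (n : ℤ) :
    pBall p n = ⋃ j : Fin p,
      (fun x => -((j : ℚ_[p]) * (p : ℚ_[p]) ^ (-n)) + x) ⁻¹' pBall p (n - 1) := by
  have hpne : ((p : ℚ_[p])) ≠ 0 := Nat.cast_ne_zero.mpr hp.out.ne_zero
  have hprne : ((p : ℝ)) ≠ 0 := ne_of_gt (p_pos p)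
  ext t
  simp only [Set.mem_iUnion, Set.mem_preimage, pBall, Set.mem_setOf_eq]
  constructor
  · intro ht
    -- x = p^n * t is a p-adic integer
    have hx : ‖(p : ℚ_[p]) ^ n * t‖ ≤ 1 := by
      rw [norm_mul, norm_zpow, Padic.norm_p, inv_zpow, ← zpow_neg]
      calc ((p:ℝ)) ^ (-n) * ‖t‖ ≤ ((p:ℝ)) ^ (-n) * (p:ℝ) ^ n := by
            apply mul_le_mul_of_nonneg_left ht (by positivity)
        _ = 1 := by
            rw [← zpow_add₀ hprne]
            simp
    set x : ℤ_[p] := ⟨(p : ℚ_[p]) ^ n * t, hx⟩ with hxdef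
    have hjlt : x.appr 1 < p := by simpa using PadicInt.appr_lt x 1
    have hspec : ‖x - ((x.appr 1 : ℕ) : ℤ_[p])‖ ≤ (p : ℝ) ^ (-(1:ℤ)) := by
      have := (PadicInt.norm_le_pow_iff_mem_span_pow (x - ((x.appr 1 : ℕ) : ℤ_[p])) 1).mpr
        (by simpa using PadicInt.appr_spec 1 x)
      simpa using this
    refine ⟨⟨x.appr 1, hjlt⟩, ?_⟩
    have hval : ((x - ((x.appr 1 : ℕ) : ℤ_[p]) : ℤ_[p]) : ℚ_[p])
        = (p : ℚ_[p]) ^ n * t - ((x.appr 1 : ℕ) : ℚ_[p]) := by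
      rw [PadicInt.coe_sub, PadicInt.coe_natCast]
    have hnorm : ‖(p : ℚ_[p]) ^ n * t - ((x.appr 1 : ℕ) : ℚ_[p])‖ ≤ (p : ℝ) ^ (-(1:ℤ)) := by
      rw [← hval]
      exact hspec
    have hcancel : (p : ℚ_[p]) ^ (-n) * ((p : ℚ_[p]) ^ n * t) = t := by
      rw [← mul_assoc, ← zpow_add₀ hpne]
      simp
    have key : -(((x.appr 1 : ℕ) : ℚ_[p]) * (p : ℚ_[p]) ^ (-n)) + t
        = (p : ℚ_[p]) ^ (-n) * ((p : ℚ_[p]) ^ n * t - ((x.appr 1 : ℕ) : ℚ_[p])) := by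
      rw [mul_sub, hcancel]
      ring
    rw [key, norm_mul, norm_zpow, Padic.norm_p, inv_zpow, ← zpow_neg, neg_neg]
    calc (p:ℝ) ^ n * ‖(p : ℚ_[p]) ^ n * t - ((x.appr 1 : ℕ) : ℚ_[p])‖
        ≤ (p:ℝ) ^ n * (p : ℝ) ^ (-(1:ℤ)) := by
          exact mul_le_mul_of_nonneg_left hnorm (by positivity)
      _ = (p:ℝ) ^ (n - 1) := by rw [← zpow_add₀ hprne]; ring_nf
  · rintro ⟨j, hj⟩
    have h1 : t = (-((j : ℚ_[p]) * (p : ℚ_[p]) ^ (-n)) + t) + (j : ℚ_[p]) * (p : ℚ_[p]) ^ (-n) := by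
      ring
    rw [h1]
    refine le_trans (Padic.nonarchimedean _ _) (max_le ?_ ?_)
    · exact le_trans hj (zpow_le_zpow_right₀ (one_lt_p p).le (by omega))
    · rw [norm_mul, norm_zpow, Padic.norm_p, inv_zpow, ← zpow_neg, neg_neg]
      calc ‖((j:ℕ) : ℚ_[p])‖ * (p:ℝ) ^ n ≤ 1 * (p:ℝ) ^ n := by
            apply mul_le_mul_of_nonneg_right (norm_coe_nat_le_one p j) (by positivity)
        _ = (p:ℝ) ^ n := one_mul _

theorem pBall_cover_disjoint (n : ℤ) :
    Pairwise (Function.onFun Disjoint (fun j : Fin p =>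
      (fun x => -((j : ℚ_[p]) * (p : ℚ_[p]) ^ (-n)) + x) ⁻¹' pBall p (n - 1))) := by
  have hprne : ((p : ℝ)) ≠ 0 := ne_of_gt (p_pos p)
  intro j j' hne
  rw [Function.onFun, Set.disjoint_left]
  intro t hj hj'
  apply hne
  simp only [Set.mem_preimage, pBall, Set.mem_setOf_eq] at hj hj'
  have hdiff : ‖((j : ℚ_[p]) - (j' : ℚ_[p])) * (p : ℚ_[p]) ^ (-n)‖ ≤ (p:ℝ) ^ (n-1) := by
    have key : ((j : ℚ_[p]) - (j' : ℚ_[p])) * (p : ℚ_[p]) ^ (-n)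
        = (-((j' : ℚ_[p]) * (p : ℚ_[p]) ^ (-n)) + t) + -(-((j : ℚ_[p]) * (p : ℚ_[p]) ^ (-n)) + t) := by
      ring
    rw [key]
    refine le_trans (Padic.nonarchimedean _ _) (max_le hj' ?_)
    rw [norm_neg]; exact hj
  rw [norm_mul, norm_zpow, Padic.norm_p, inv_zpow, ← zpow_neg, neg_neg] at hdiff
  have hd2 : ‖(((j : ℤ) - (j' : ℤ) : ℤ) : ℚ_[p])‖ ≤ (p:ℝ) ^ (-(1:ℤ)) := by
    have hcast : (((j : ℤ) - (j' : ℤ) : ℤ) : ℚ_[p]) = (j : ℚ_[p]) - (j' : ℚ_[p]) := by push_cast; ring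
    rw [hcast]
    have hpn : (0:ℝ) < (p:ℝ) ^ n := by positivity
    refine le_of_mul_le_mul_right ?_ hpn
    calc ‖(j : ℚ_[p]) - (j' : ℚ_[p])‖ * (p:ℝ) ^ n ≤ (p:ℝ) ^ (n-1) := hdiff
      _ = (p:ℝ) ^ (-(1:ℤ)) * (p:ℝ) ^ n := by rw [← zpow_add₀ hprne]; ring_nf
  rw [show (-(1:ℤ)) = -((1:ℕ):ℤ) by norm_num, Padic.norm_int_le_pow_iff_dvd] at hd2
  have hdvd : (p : ℤ) ∣ ((j:ℤ) - (j':ℤ)) := by simpa using hd2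
  have habs : ((j:ℤ) - (j':ℤ)).natAbs < p := by
    have := j.isLt; have := j'.isLt; omega
  have hdvd' : p ∣ ((j:ℤ) - (j':ℤ)).natAbs := by
    have := Int.natAbs_dvd_natAbs.mpr hdvd
    simpa using this
  have hzero : ((j:ℤ) - (j':ℤ)).natAbs = 0 := Nat.eq_zero_of_dvd_of_lt hdvd' habs
  have hzz : (j:ℤ) = (j':ℤ) := by omega
  exact Fin.ext (by exact_mod_cast hzz)

end Balls

section Measure

variable (p : ℕ) [hp : Fact p.Prime] [MeasurableSpace ℚ_[p]] [BorelSpace ℚ_[p]]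
  (μ : Measure ℚ_[p]) [μ.IsAddHaarMeasure]

theorem measure_pBall_rec (n : ℤ) : μ (pBall p n) = p * μ (pBall p (n - 1)) := by
  rw [pBall_cover p n, measure_iUnion (pBall_cover_disjoint p n)
    (fun j => (measurableSet_pBall p (n-1)).preimage (measurable_const_add _))]
  simp only [measure_preimage_add]
  rw [tsum_fintype]
  simp [Finset.sum_const, Finset.card_univ, nsmul_eq_mul]

theorem measure_pBall (hμ : μ {x : ℚ_[p] | ‖x‖ ≤ 1} = 1) (n : ℤ) :
    μ (pBall p n) = (p : ℝ≥0∞) ^ n := by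
  have hp0 : ((p:ℝ≥0∞)) ≠ 0 := by exact_mod_cast hp.out.ne_zero
  have hpt : ((p:ℝ≥0∞)) ≠ ⊤ := ENNReal.natCast_ne_top p
  have base : μ (pBall p 0) = 1 := by
    rw [show pBall p 0 = {x : ℚ_[p] | ‖x‖ ≤ 1} by simp [pBall]]
    exact hμ
  induction n using Int.induction_on with
  | zero => simpa using base
  | succ k ih =>
    have hrec := measure_pBall_rec p μ ((k:ℤ)+1)
    rw [show ((k:ℤ) + 1 - 1) = (k:ℤ) by ring] at hrec
    rw [hrec, ih, show ((k:ℤ) + 1) = 1 + (k:ℤ) by ring,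
      ENNReal.zpow_add hp0 hpt, zpow_one]
  | pred k ih =>
    have hrec := measure_pBall_rec p μ (-(k:ℤ))
    have hstep : μ (pBall p (-(k:ℤ) - 1)) = (p:ℝ≥0∞)⁻¹ * ((p:ℝ≥0∞) * μ (pBall p (-(k:ℤ) - 1))) := by
      rw [← mul_assoc, ENNReal.inv_mul_cancel hp0 hpt, one_mul]
    rw [hstep, ← hrec, ih,
      show (-(k:ℤ) - 1) = (-1) + (-(k:ℤ)) by ring,
      ENNReal.zpow_add hp0 hpt]
    congr 1
    rw [ENNReal.zpow_neg, zpow_one]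

end Measure

section Annuli

variable (p : ℕ) [hp : Fact p.Prime]

theorem coe_zpow_toReal (n : ℤ) : ((p:ℝ≥0∞)^n).toReal = (p:ℝ)^n := by
  cases n with
  | ofNat k => simp [ENNReal.toReal_pow]
  | negSucc k => simp [zpow_negSucc, ENNReal.toReal_inv, ENNReal.toReal_pow]

/-- The annulus of norm exactly `p^n`. -/
def pAnn (n : ℤ) : Set ℚ_[p] := {t : ℚ_[p] | ‖t‖ = (p : ℝ) ^ n}

theorem exists_norm_eq_zpow {t : ℚ_[p]} (ht : t ≠ 0) : ∃ n : ℤ, ‖t‖ = (p:ℝ) ^ n :=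
  ⟨-t.valuation, Padic.norm_eq_zpow_neg_valuation ht⟩

theorem pAnn_eq (n : ℤ) : pAnn p n = pBall p n \ pBall p (n - 1) := by
  ext t
  simp only [pAnn, pBall, Set.mem_setOf_eq, Set.mem_diff]
  constructor
  · intro h
    refine ⟨le_of_eq h, ?_⟩
    rw [h]
    push_neg
    exact zpow_lt_zpow_right₀ (one_lt_p p) (by omega)
  · rintro ⟨h1, h2⟩
    push_neg at h2
    have ht : t ≠ 0 := by
      intro h0
      rw [h0, norm_zero] at h2
      exact absurd h2 (not_lt.mpr (by positivity))
    obtain ⟨m, hm⟩ := exists_norm_eq_zpow p ht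
    rw [hm] at h1 h2 ⊢
    have hle : m ≤ n := (zpow_le_zpow_iff_right₀ (one_lt_p p)).mp h1
    have hgt : n - 1 < m := (zpow_lt_zpow_iff_right₀ (one_lt_p p)).mp h2
    congr 1
    omega

theorem pAnn_subset (n : ℤ) : pAnn p n ⊆ pBall p n := by
  rw [pAnn_eq]; exact Set.diff_subset

theorem ne_zero_of_mem_pAnn {n : ℤ} {t : ℚ_[p]} (h : t ∈ pAnn p n) : t ≠ 0 := by
  intro h0
  rw [pAnn, Set.mem_setOf_eq, h0, norm_zero] at h
  have : (0:ℝ) < (p:ℝ) ^ n := by have := p_pos p; positivity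
  exact absurd h.symm (ne_of_gt this)

theorem measurableSet_pAnn [MeasurableSpace ℚ_[p]] [BorelSpace ℚ_[p]] (n : ℤ) :
    MeasurableSet (pAnn p n) := by
  rw [pAnn_eq]
  exact (measurableSet_pBall p n).diff (measurableSet_pBall p (n-1))

variable [MeasurableSpace ℚ_[p]] [BorelSpace ℚ_[p]]
  (μ : Measure ℚ_[p]) [μ.IsAddHaarMeasure]

theorem measure_pBall_ne_top (hμ : μ {x : ℚ_[p] | ‖x‖ ≤ 1} = 1) (n : ℤ) :
    μ (pBall p n) ≠ ⊤ := by
  rw [measure_pBall p μ hμ n]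
  exact (ENNReal.zpow_lt_top (by exact_mod_cast hp.out.ne_zero) (ENNReal.natCast_ne_top p) n).ne

theorem toReal_measure_pBall (hμ : μ {x : ℚ_[p] | ‖x‖ ≤ 1} = 1) (n : ℤ) :
    (μ (pBall p n)).toReal = (p:ℝ)^n := by
  rw [measure_pBall p μ hμ n, coe_zpow_toReal]

theorem toReal_measure_pAnn (hμ : μ {x : ℚ_[p] | ‖x‖ ≤ 1} = 1) (n : ℤ) :
    (μ (pAnn p n)).toReal = (p:ℝ)^n - (p:ℝ)^(n-1) := by
  rw [pAnn_eq, measure_diff (pBall_mono p (by omega))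
    (measurableSet_pBall p (n-1)).nullMeasurableSet (measure_pBall_ne_top p μ hμ (n-1)),
    measure_pBall p μ hμ, measure_pBall p μ hμ,
    ENNReal.toReal_sub_of_le ?_ ?_, coe_zpow_toReal, coe_zpow_toReal]
  · exact ENNReal.zpow_le_of_le (by exact_mod_cast hp.out.one_lt.le) (by omega)
  · exact (ENNReal.zpow_lt_top (by exact_mod_cast hp.out.ne_zero) (ENNReal.natCast_ne_top p) n).ne

theorem measure_pAnn_ne_top (hμ : μ {x : ℚ_[p] | ‖x‖ ≤ 1} = 1) (n : ℤ) :
    μ (pAnn p n) ≠ ⊤ :=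
  fun h => measure_pBall_ne_top p μ hμ n
    (eq_top_iff.mpr (le_trans (le_of_eq h.symm) (measure_mono (pAnn_subset p n))))

example : NullSingletonClass μ := inferInstance

end Annuli

section Integrals

variable (p : ℕ) [hp : Fact p.Prime] [MeasurableSpace ℚ_[p]] [BorelSpace ℚ_[p]]
  (μ : Measure ℚ_[p]) [μ.IsAddHaarMeasure]
  (hμ : μ {x : ℚ_[p] | ‖x‖ ≤ 1} = 1)
  (ψ : ℚ_[p] → ℂ) (hψc : Continuous ψ)
  (hψ1 : ∀ t : ℚ_[p], ‖t‖ ≤ 1 → ψ t = 1)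
  (hψn : ∀ t : ℚ_[p], ¬ (‖t‖ ≤ 1) → ψ t ≠ 1)
  (hψadd : ∀ t s : ℚ_[p], ψ (t + s) = ψ t * ψ s)
  (hψnorm : ∀ t : ℚ_[p], ‖ψ t‖ = 1)

include hμ hψc hψnorm in
theorem integrableOn_psi (n : ℤ) : IntegrableOn ψ (pBall p n) μ := by
  refine ⟨hψc.aestronglyMeasurable.restrict, ?_⟩
  refine HasFiniteIntegral.restrict_of_bounded (C := 1)
    (lt_top_iff_ne_top.mpr (measure_pBall_ne_top p μ hμ n)) ?_
  exact ae_of_all _ (fun t => (hψnorm t).le)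

include hψ1 in
theorem setIntegral_psi_ball_zero : ∫ t in pBall p 0, ψ t ∂μ = (μ (pBall p 0)).toReal := by
  rw [setIntegral_congr_fun (measurableSet_pBall p 0) (g := fun _ => (1:ℂ))
    (fun t ht => hψ1 t (by simpa [pBall] using ht))]
  simp [setIntegral_const]; rfl

include hμ hψc hψ1 hψn hψadd hψnorm in
theorem setIntegral_psi_ball_pos {n : ℤ} (hn : 1 ≤ n) : ∫ t in pBall p n, ψ t ∂μ = 0 := by
  set t₀ : ℚ_[p] := (p : ℚ_[p]) ^ (-1 : ℤ) with ht₀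
  have hpge : (1:ℝ) < (p:ℝ) := one_lt_p p
  have ht₀norm : ‖t₀‖ = (p:ℝ) ^ (1:ℤ) := by
    rw [ht₀, norm_zpow, Padic.norm_p]
    rw [inv_zpow, ← zpow_neg, neg_neg]
  have ht₀big : ¬ (‖t₀‖ ≤ 1) := by
    rw [ht₀norm]
    push_neg
    calc (1:ℝ) = (p:ℝ)^(0:ℤ) := by norm_num
      _ < (p:ℝ)^(1:ℤ) := zpow_lt_zpow_right₀ hpge (by omega)
  have hψt₀ : ψ t₀ ≠ 1 := hψn t₀ ht₀big
  -- the ball is invariant under translation by t₀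
  have hpre : (fun x => t₀ + x) ⁻¹' (pBall p n) = pBall p n := by
    ext x
    simp only [Set.mem_preimage, pBall, Set.mem_setOf_eq]
    have ht₀le : ‖t₀‖ ≤ (p:ℝ)^n := by
      rw [ht₀norm]
      exact zpow_le_zpow_right₀ hpge.le hn
    constructor
    · intro h
      have : x = (t₀ + x) + -t₀ := by ring
      rw [this]
      refine le_trans (Padic.nonarchimedean _ _) (max_le h ?_)
      rwa [norm_neg]
    · intro h
      exact le_trans (Padic.nonarchimedean _ _) (max_le ht₀le h)
  have hcoe : ⇑(MeasurableEquiv.addLeft t₀) = fun x => t₀ + x := rfl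
  have hmap : Measure.map (⇑(MeasurableEquiv.addLeft t₀)) μ = μ := by
    rw [hcoe]; exact map_add_left_eq_self μ t₀
  have key : ∫ t in pBall p n, ψ t ∂μ = ψ t₀ * ∫ t in pBall p n, ψ t ∂μ := by
    conv_lhs => rw [← hmap]
    rw [(MeasurableEquiv.addLeft t₀).measurableEmbedding.setIntegral_map, hcoe, hpre]
    rw [setIntegral_congr_fun (measurableSet_pBall p n)
      (g := fun x => ψ t₀ * ψ x) (fun x _ => hψadd t₀ x)]
    rw [integral_const_mul]
  have h2 : (1 - ψ t₀) * ∫ t in pBall p n, ψ t ∂μ = 0 := by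
    rw [sub_mul, one_mul, ← key, sub_self]
  rcases mul_eq_zero.mp h2 with h | h
  · exact absurd (sub_eq_zero.mp h).symm hψt₀
  · exact h

end Integrals

section Gpart

variable (p : ℕ) [hp : Fact p.Prime] [MeasurableSpace ℚ_[p]] [BorelSpace ℚ_[p]]
  (μ : Measure ℚ_[p]) [μ.IsAddHaarMeasure]
  (hμ : μ {x : ℚ_[p] | ‖x‖ ≤ 1} = 1)
  (ψ : ℚ_[p] → ℂ) (hψc : Continuous ψ)
  (hψ1 : ∀ t : ℚ_[p], ‖t‖ ≤ 1 → ψ t = 1)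
  (hψnorm : ∀ t : ℚ_[p], ‖ψ t‖ = 1)
  (b : ℂ) (hb0 : b ≠ 0) (hb1 : ‖b‖ < 1)
  (G : ℚ_[p] → ℂ) (hG0 : G 0 = 0)
  (hGval : ∀ (n : ℤ) (t : ℚ_[p]), ‖t‖ = (p:ℝ)^n → G t = b ^ (-n))

/-- Norms are locally constant. -/
theorem norm_eq_of_dist_lt {t₀ t : ℚ_[p]} (h : ‖t - t₀‖ < ‖t₀‖) : ‖t‖ = ‖t₀‖ := by
  have hne : ‖t - t₀‖ ≠ ‖t₀‖ := ne_of_lt h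
  have : t = (t - t₀) + t₀ := by ring
  rw [this, Padic.add_eq_max_of_ne hne, max_eq_right h.le]

include hψc hGval in
theorem Gpsi_continuousOn : ContinuousOn (fun t => G t * ψ t) {(0:ℚ_[p])}ᶜ := by
  intro t₀ ht₀
  have ht₀ne : t₀ ≠ 0 := ht₀
  obtain ⟨n, hn⟩ := exists_norm_eq_zpow p ht₀ne
  have ht₀pos : 0 < ‖t₀‖ := norm_pos_iff.mpr ht₀ne
  have hev : (fun t => G t * ψ t) =ᶠ[nhds t₀] (fun t => b ^ (-n) * ψ t) := by
    filter_upwards [Metric.ball_mem_nhds t₀ ht₀pos] with t ht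
    rw [Metric.mem_ball, dist_eq_norm] at ht
    rw [hGval n t (by rw [norm_eq_of_dist_lt p ht, hn])]
  exact ((continuous_const.mul hψc).continuousAt.congr hev.symm).continuousWithinAt

include hμ hψc hGval in
theorem Gpsi_aesm {s : Set ℚ_[p]} (hs : MeasurableSet s) :
    AEStronglyMeasurable (fun t => G t * ψ t) (μ.restrict s) := by
  have hs0 : MeasurableSet (s \ {0}) := hs.diff (measurableSet_singleton 0)
  have hre : μ.restrict s = μ.restrict (s \ {0}) := by
    refine (Measure.restrict_congr_set ?_).symm
    exact diff_ae_eq_self.mpr (by simp [measure_mono_null Set.inter_subset_right])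
  rw [hre]
  exact ((Gpsi_continuousOn p ψ hψc b G hGval).mono
    (fun t ht => ht.2)).aestronglyMeasurable hs0

include hμ hψc hψnorm hb0 hb1 hG0 hGval in
theorem Gpsi_integrableOn (N : ℤ) :
    IntegrableOn (fun t => G t * ψ t) (pBall p N) μ := by
  have hbpos : 0 < ‖b‖ := norm_pos_iff.mpr hb0
  refine ⟨Gpsi_aesm p μ hμ ψ hψc b G hGval (measurableSet_pBall p N), ?_⟩
  refine HasFiniteIntegral.restrict_of_bounded (C := ‖b‖ ^ (-N))
    (lt_top_iff_ne_top.mpr (measure_pBall_ne_top p μ hμ N)) ?_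
  rw [ae_restrict_iff' (measurableSet_pBall p N)]
  refine ae_of_all _ (fun t ht => ?_)
  by_cases ht0 : t = 0
  · rw [ht0, hG0, zero_mul, norm_zero]
    positivity
  · obtain ⟨m, hm⟩ := exists_norm_eq_zpow p ht0
    have hmN : m ≤ N := by
      rw [pBall, Set.mem_setOf_eq, hm] at ht
      exact (zpow_le_zpow_iff_right₀ (one_lt_p p)).mp ht
    rw [norm_mul, hGval m t hm, norm_zpow, hψnorm, mul_one]
    exact zpow_le_zpow_right_of_le_one₀ hbpos hb1.le (by omega)

end Gpart

section Main

variable (p : ℕ) [hp : Fact p.Prime] [MeasurableSpace ℚ_[p]] [BorelSpace ℚ_[p]]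
  (μ : Measure ℚ_[p]) [μ.IsAddHaarMeasure]
  (hμ : μ {x : ℚ_[p] | ‖x‖ ≤ 1} = 1)
  (ψ : ℚ_[p] → ℂ) (hψc : Continuous ψ)
  (hψ1 : ∀ t : ℚ_[p], ‖t‖ ≤ 1 → ψ t = 1)
  (hψn : ∀ t : ℚ_[p], ¬ (‖t‖ ≤ 1) → ψ t ≠ 1)
  (hψadd : ∀ t s : ℚ_[p], ψ (t + s) = ψ t * ψ s)
  (hψnorm : ∀ t : ℚ_[p], ‖ψ t‖ = 1)
  (b : ℂ) (hb0 : b ≠ 0) (hb1 : ‖b‖ < 1)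
  (G : ℚ_[p] → ℂ) (hG0 : G 0 = 0)
  (hGval : ∀ (n : ℤ) (t : ℚ_[p]), ‖t‖ = (p:ℝ)^n → G t = b ^ (-n))

include hμ hψc hψnorm hGval in
theorem setIntegral_Gpsi_ann (n : ℤ) :
    ∫ t in pAnn p n, G t * ψ t ∂μ
      = b ^ (-n) * ((∫ t in pBall p n, ψ t ∂μ) - ∫ t in pBall p (n-1), ψ t ∂μ) := by
  have h1 : ∫ t in pAnn p n, G t * ψ t ∂μ = ∫ t in pAnn p n, b ^ (-n) * ψ t ∂μ :=
    setIntegral_congr_fun (measurableSet_pAnn p n) (fun t ht => by rw [hGval n t ht])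
  have hunion : pBall p n = pBall p (n-1) ∪ pAnn p n := by
    rw [pAnn_eq]
    exact (Set.union_diff_cancel (pBall_mono p (by omega))).symm
  have hdisj : Disjoint (pBall p (n-1)) (pAnn p n) := by
    rw [pAnn_eq]
    exact Set.disjoint_sdiff_right
  have hi1 : IntegrableOn ψ (pBall p (n-1)) μ := integrableOn_psi p μ hμ ψ hψc hψnorm (n-1)
  have hi2 : IntegrableOn ψ (pAnn p n) μ :=
    (integrableOn_psi p μ hμ ψ hψc hψnorm n).mono_set (pAnn_subset p n)
  have h2 : ∫ t in pBall p n, ψ t ∂μ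
      = (∫ t in pBall p (n-1), ψ t ∂μ) + ∫ t in pAnn p n, ψ t ∂μ := by
    conv_lhs => rw [hunion]
    exact setIntegral_union hdisj (measurableSet_pAnn p n) hi1 hi2
  rw [h1, integral_const_mul, h2]
  ring

include hμ hψ1 hGval in
theorem setIntegral_Gpsi_ann_nonpos {n : ℤ} (hn : n ≤ 0) :
    ∫ t in pAnn p n, G t * ψ t ∂μ
      = (((p:ℝ)^n - (p:ℝ)^(n-1) : ℝ) : ℂ) * b ^ (-n) := by
  have heq : Set.EqOn (fun t => G t * ψ t) (fun _ => b ^ (-n)) (pAnn p n) := by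
    intro t ht
    have htn : ‖t‖ = (p:ℝ)^n := ht
    have hψt : ψ t = 1 := by
      apply hψ1
      rw [htn]
      calc (p:ℝ)^n ≤ (p:ℝ)^(0:ℤ) := zpow_le_zpow_right₀ (one_lt_p p).le hn
        _ = 1 := by norm_num
    simp only
    rw [hGval n t htn, hψt, mul_one]
  rw [setIntegral_congr_fun (measurableSet_pAnn p n) heq, setIntegral_const, measureReal_def,
    toReal_measure_pAnn p μ hμ n, Complex.real_smul]

include hμ hψc hψ1 hψnorm hb0 hb1 hG0 hGval in
theorem setIntegral_Gpsi_ball_zero :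
    ∫ t in pBall p 0, G t * ψ t ∂μ = (1 - (p:ℂ)⁻¹) * (1 - b * (p:ℂ)⁻¹)⁻¹ := by
  have hpC : ((p:ℂ)) ≠ 0 := by exact_mod_cast hp.out.ne_zero
  have hpR : (0:ℝ) < (p:ℝ) := p_pos p
  have hsplit : pBall p 0 \ {0} = ⋃ m : ℕ, pAnn p (-(m:ℤ)) := by
    ext t
    simp only [Set.mem_diff, Set.mem_singleton_iff, Set.mem_iUnion]
    constructor
    · rintro ⟨ht, ht0⟩
      obtain ⟨n, hn⟩ := exists_norm_eq_zpow p ht0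
      have hn0 : n ≤ 0 := by
        rw [pBall, Set.mem_setOf_eq, hn] at ht
        have := (zpow_le_zpow_iff_right₀ (one_lt_p p)).mp
          (by simpa using ht : (p:ℝ)^n ≤ (p:ℝ)^(0:ℤ))
        omega
      refine ⟨(-n).toNat, ?_⟩
      rw [pAnn, Set.mem_setOf_eq, hn]
      congr 1
      omega
    · rintro ⟨m, hm⟩
      rw [pAnn, Set.mem_setOf_eq] at hm
      constructor
      · rw [pBall, Set.mem_setOf_eq, hm]
        calc (p:ℝ)^(-(m:ℤ)) ≤ (p:ℝ)^(0:ℤ) := zpow_le_zpow_right₀ (one_lt_p p).le (by omega)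
          _ = 1 := by norm_num
      · intro h0
        rw [h0, norm_zero] at hm
        exact absurd hm.symm (ne_of_gt (by positivity))
  have hae : (pBall p 0 : Set ℚ_[p]) =ᵐ[μ] (pBall p 0 \ ({0} : Set ℚ_[p])) :=
    (diff_ae_eq_self.mpr (by simp [measure_mono_null Set.inter_subset_right])).symm
  have hintU : IntegrableOn (fun t => G t * ψ t) (pBall p 0 \ {0}) μ :=
    (Gpsi_integrableOn p μ hμ ψ hψc hψnorm b hb0 hb1 G hG0 hGval 0).mono_set Set.diff_subset
  have hdisj : Pairwise (Function.onFun Disjoint (fun m : ℕ => pAnn p (-(m:ℤ)))) := by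
    intro i j hij
    rw [Function.onFun, Set.disjoint_left]
    intro t hti htj
    rw [pAnn, Set.mem_setOf_eq] at hti htj
    apply hij
    have := (zpow_right_strictMono₀ (one_lt_p p)).injective (hti.symm.trans htj)
    omega
  calc ∫ t in pBall p 0, G t * ψ t ∂μ
      = ∫ t in pBall p 0 \ {0}, G t * ψ t ∂μ := setIntegral_congr_set hae
    _ = ∑' m : ℕ, ∫ t in pAnn p (-(m:ℤ)), G t * ψ t ∂μ := by
        rw [hsplit] at hintU ⊢
        exact integral_iUnion (fun m => measurableSet_pAnn p _) hdisj hintU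
    _ = ∑' m : ℕ, (1 - (p:ℂ)⁻¹) * (b * (p:ℂ)⁻¹) ^ m := by
        congr 1
        funext m
        rw [setIntegral_Gpsi_ann_nonpos p μ hμ ψ hψ1 b G hGval (by omega : -(m:ℤ) ≤ 0)]
        have h1 : (p:ℝ)^(-(m:ℤ)) = ((p:ℝ)⁻¹)^m := by
          rw [zpow_neg, zpow_natCast, inv_pow]
        have h2 : (p:ℝ)^(-(m:ℤ)-1) = ((p:ℝ)⁻¹)^m * (p:ℝ)⁻¹ := by
          rw [show (-(m:ℤ)-1) = -(m:ℤ) + (-1) by ring, zpow_add₀ (ne_of_gt hpR), h1]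
          norm_num
        rw [h1, h2, neg_neg, zpow_natCast]
        push_cast
        ring
    _ = (1 - (p:ℂ)⁻¹) * (1 - b * (p:ℂ)⁻¹)⁻¹ := by
        rw [tsum_mul_left, tsum_geometric_of_norm_lt_one ?_]
        rw [norm_mul, norm_inv]
        have : ‖(p:ℂ)‖ = (p:ℝ) := by
          simp [Complex.norm_natCast]
        rw [this]
        have hple : (p:ℝ)⁻¹ ≤ 1 := by
          rw [inv_le_one_iff₀]
          right
          exact_mod_cast hp.out.one_le
        calc ‖b‖ * (p:ℝ)⁻¹ ≤ ‖b‖ * 1 :=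
              mul_le_mul_of_nonneg_left hple (norm_nonneg b)
          _ = ‖b‖ := mul_one _
          _ < 1 := hb1

include hμ hψc hψ1 hψn hψadd hψnorm hb0 hb1 hG0 hGval in
theorem setIntegral_Gpsi_ballN {N : ℕ} (hN : 1 ≤ N) :
    ∫ t in pBall p (N:ℤ), G t * ψ t ∂μ
      = (1 - b⁻¹) / (1 - b * (p:ℂ)⁻¹) := by
  have hpC : ((p:ℂ)) ≠ 0 := by exact_mod_cast hp.out.ne_zero
  have hq : (1 - b * (p:ℂ)⁻¹) ≠ 0 := by
    intro h
    have hbp : b * (p:ℂ)⁻¹ = 1 := by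
      have := sub_eq_zero.mp h
      exact this.symm
    have : ‖b * (p:ℂ)⁻¹‖ < 1 := by
      rw [norm_mul, norm_inv]
      have hc : ‖(p:ℂ)‖ = (p:ℝ) := by simp [Complex.norm_natCast]
      rw [hc]
      have hple : (p:ℝ)⁻¹ ≤ 1 := by
        rw [inv_le_one_iff₀]; right; exact_mod_cast hp.out.one_le
      calc ‖b‖ * (p:ℝ)⁻¹ ≤ ‖b‖ * 1 := mul_le_mul_of_nonneg_left hple (norm_nonneg b)
        _ = ‖b‖ := mul_one _
        _ < 1 := hb1
    rw [hbp] at this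
    simp at this
  -- The key recursion
  have hstep : ∀ n : ℤ, 1 ≤ n → ∫ t in pBall p n, G t * ψ t ∂μ
      = (∫ t in pBall p (n-1), G t * ψ t ∂μ)
        + b ^ (-n) * ((∫ t in pBall p n, ψ t ∂μ) - ∫ t in pBall p (n-1), ψ t ∂μ) := by
    intro n hn
    have hunion : pBall p n = pBall p (n-1) ∪ pAnn p n := by
      rw [pAnn_eq]
      exact (Set.union_diff_cancel (pBall_mono p (by omega))).symm
    have hdisj : Disjoint (pBall p (n-1)) (pAnn p n) := by
      rw [pAnn_eq]; exact Set.disjoint_sdiff_right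
    have hi1 := Gpsi_integrableOn p μ hμ ψ hψc hψnorm b hb0 hb1 G hG0 hGval (n-1)
    have hi2 := (Gpsi_integrableOn p μ hμ ψ hψc hψnorm b hb0 hb1 G hG0 hGval n).mono_set
      (pAnn_subset p n)
    conv_lhs => rw [hunion]
    rw [setIntegral_union hdisj (measurableSet_pAnn p n) hi1 hi2,
      setIntegral_Gpsi_ann p μ hμ ψ hψc hψnorm b G hGval n]
  have hball0 : ∫ t in pBall p 0, ψ t ∂μ = 1 := by
    rw [setIntegral_psi_ball_zero p μ ψ hψ1, toReal_measure_pBall p μ hμ 0]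
    norm_num
  have hS := setIntegral_Gpsi_ball_zero p μ hμ ψ hψc hψ1 hψnorm b hb0 hb1 G hG0 hGval
  -- value at N = 1
  have hone : ∫ t in pBall p (1:ℤ), G t * ψ t ∂μ
      = (1 - (p:ℂ)⁻¹) * (1 - b * (p:ℂ)⁻¹)⁻¹ - b⁻¹ := by
    rw [hstep 1 le_rfl, show ((1:ℤ) - 1) = (0:ℤ) by ring,
      setIntegral_psi_ball_pos p μ hμ ψ hψc hψ1 hψn hψadd hψnorm le_rfl, hball0, hS]
    simp only [zpow_neg_one]
    ring
  have hpb : (p:ℂ) - b ≠ 0 := by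
    intro h
    have hbp : b = (p:ℂ) := (sub_eq_zero.mp h).symm
    apply hq
    rw [hbp, mul_inv_cancel₀ hpC, sub_self]
  have halg : (1 - (p:ℂ)⁻¹) * (1 - b * (p:ℂ)⁻¹)⁻¹ - b⁻¹ = (1 - b⁻¹) / (1 - b * (p:ℂ)⁻¹) := by
    field_simp
    ring
  -- induction
  induction N, hN using Nat.le_induction with
  | base => rw [show (((1:ℕ)):ℤ) = (1:ℤ) by norm_num, hone, halg]
  | succ n hn ih =>
    have hcast : ((n+1 : ℕ) : ℤ) = (n:ℤ) + 1 := by push_cast; ring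
    have hn1 : (1:ℤ) ≤ (n:ℤ) := by exact_mod_cast hn
    rw [hcast, hstep ((n:ℤ)+1) (by omega),
      show ((n:ℤ) + 1 - 1) = (n:ℤ) by ring, ih,
      setIntegral_psi_ball_pos p μ hμ ψ hψc hψ1 hψn hψadd hψnorm (by omega : 1 ≤ (n:ℤ)+1),
      setIntegral_psi_ball_pos p μ hμ ψ hψc hψ1 hψn hψadd hψnorm hn1]
    ring

end Main


/-- Let `μ` be the Haar measure on `ℚ_p` with `μ(ℤ_p) = 1`, `ψ` the standard
additive character, and `β : ℚ_p^× → ℂ^×` an unramified character with `|β(p)| < 1`.  Then the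
integrals of `β·ψ` over `{v(t) ≥ -N}` stabilize for `N ≥ 1` at the value
`(1 - β(p)⁻¹)/(1 - β(p)·p⁻¹)`, and in particular converge to it as `N → ∞`. -/
theorem integral_unramified_char_mul_padicChar
    (p : ℕ) [hp : Fact p.Prime] [MeasurableSpace ℚ_[p]] [BorelSpace ℚ_[p]]
    (μ : Measure ℚ_[p]) [μ.IsAddHaarMeasure]
    (hμ : μ {x : ℚ_[p] | ‖x‖ ≤ 1} = 1)
    (β : ℚ_[p]ˣ →* ℂˣ)
    (hβ : ∀ u : ℚ_[p]ˣ, ‖(u : ℚ_[p])‖ = 1 → β u = 1)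
    (up : ℚ_[p]ˣ) (hup : (up : ℚ_[p]) = (p : ℚ_[p]))
    (hb : ‖((β up : ℂˣ) : ℂ)‖ < 1) :
    (∀ N : ℕ, 1 ≤ N →
      ∫ t in {t : ℚ_[p] | ‖t‖ ≤ (p : ℝ) ^ (N : ℤ)},
          (if h : t = 0 then 0 else ((β (Units.mk0 t h) : ℂˣ) : ℂ)) * padicChar p t ∂μ =
        (1 - (((β up : ℂˣ) : ℂ))⁻¹) / (1 - ((β up : ℂˣ) : ℂ) * (p : ℂ)⁻¹)) ∧
    Tendsto (fun N : ℕ =>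
        ∫ t in {t : ℚ_[p] | ‖t‖ ≤ (p : ℝ) ^ (N : ℤ)},
          (if h : t = 0 then 0 else ((β (Units.mk0 t h) : ℂˣ) : ℂ)) * padicChar p t ∂μ)
      atTop
      (nhds ((1 - (((β up : ℂˣ) : ℂ))⁻¹) / (1 - ((β up : ℂˣ) : ℂ) * (p : ℂ)⁻¹))) := by
  have hψc := padicChar_continuous p
  have hψ1 : ∀ t : ℚ_[p], ‖t‖ ≤ 1 → padicChar p t = 1 := padicChar_eq_one_of p
  have hψn : ∀ t : ℚ_[p], ¬ (‖t‖ ≤ 1) → padicChar p t ≠ 1 := padicChar_ne_one p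
  have hψadd := padicChar_add p
  have hψnorm := padicChar_norm p
  set b : ℂ := ((β up : ℂˣ) : ℂ) with hbdef
  have hb0 : b ≠ 0 := Units.ne_zero _
  set G : ℚ_[p] → ℂ :=
    fun t => if h : t = 0 then 0 else ((β (Units.mk0 t h) : ℂˣ) : ℂ) with hGdef
  have hG0 : G 0 = 0 := dif_pos rfl
  have hGval : ∀ (n : ℤ) (t : ℚ_[p]), ‖t‖ = (p:ℝ)^n → G t = b ^ (-n) := by
    intro n t ht
    have ht0 : t ≠ 0 := by
      intro h0
      rw [h0, norm_zero] at ht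
      have : (0:ℝ) < (p:ℝ)^n := by have := p_pos p; positivity
      exact absurd ht.symm (ne_of_gt this)
    have : G t = ((β (Units.mk0 t ht0) : ℂˣ) : ℂ) := dif_neg ht0
    rw [this]
    exact beta_val p β hβ up hup n t ht0 ht
  have key : ∀ N : ℕ, 1 ≤ N →
      ∫ t in {t : ℚ_[p] | ‖t‖ ≤ (p : ℝ) ^ (N : ℤ)},
          (if h : t = 0 then 0 else ((β (Units.mk0 t h) : ℂˣ) : ℂ)) * padicChar p t ∂μ =
        (1 - (((β up : ℂˣ) : ℂ))⁻¹) / (1 - ((β up : ℂˣ) : ℂ) * (p : ℂ)⁻¹) := by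
    intro N hN
    have := setIntegral_Gpsi_ballN p μ hμ (padicChar p) hψc hψ1 hψn hψadd hψnorm
      b hb0 hb hG0 hGval hN (G := G)
    exact this
  refine ⟨key, ?_⟩
  refine tendsto_atTop_of_eventually_const (i₀ := 1) ?_
  intro N hN
  exact key N hN
end
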